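/- arXiv:2006.12301 — 2 statements merged into one kernel-verified Lean document; each statement's English description precedes it below -/
import Mathlib

section
/- If sequences of probability measures μ_i ⇒ μ and ν_i ⇒ ν weakly on ℝ^d, then the PRW distance is lower semicontinuous: PW̄_{p,k}(μ, ν) ≤ liminf_{i→∞} PW̄_{p,k}(μ_i, ν_i). -/
open MeasureTheory Filter Topology
open scoped ENNReal BoundedContinuousFunction

noncomputable def Wp {α : Type*} [MeasurableSpace α] [PseudoMetricSpace α]
    (p : ℝ) (μ ν : Measure α) : ℝ≥0∞ :=
  ⨅ π ∈ {π : Measure (α × α) | π.map Prod.fst = μ ∧ π.map Prod.snd = ν},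
    (∫⁻ z, ENNReal.ofReal (dist z.1 z.2 ^ p) ∂π) ^ (1 / p)

def Stiefel (d k : ℕ) : Set (Matrix (Fin d) (Fin k) ℝ) :=
  {E | E.transpose * E = 1}

noncomputable def proj {d k : ℕ} (E : Matrix (Fin d) (Fin k) ℝ)
    (x : EuclideanSpace ℝ (Fin d)) : EuclideanSpace ℝ (Fin k) :=
  (WithLp.equiv 2 (Fin k → ℝ)).symm (E.transpose.mulVec ((WithLp.equiv 2 (Fin d → ℝ)) x))

noncomputable def PRW (p : ℝ) {d : ℕ} (k : ℕ)
    (μ ν : Measure (EuclideanSpace ℝ (Fin d))) : ℝ≥0∞ :=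
  ⨆ E ∈ Stiefel d k, Wp p (μ.map (proj E)) (ν.map (proj E))

def WeakConv {α : Type*} [MeasurableSpace α] [TopologicalSpace α]
    (μs : ℕ → Measure α) (μ : Measure α) : Prop :=
  ∀ f : α →ᵇ ℝ, Tendsto (fun i => ∫ x, f x ∂(μs i)) atTop (𝓝 (∫ x, f x ∂μ))

noncomputable def empMeasure {α : Type*} [MeasurableSpace α] {n : ℕ} (X : Fin n → α) :
    Measure α :=
  (n : ℝ≥0∞)⁻¹ • ∑ i, Measure.dirac (X i)

instance matMeas {d k : ℕ} : MeasurableSpace (Matrix (Fin d) (Fin k) ℝ) :=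
  MeasurableSpace.pi

noncomputable def IPRW (p : ℝ) {d k : ℕ} (σ : Measure (Matrix (Fin d) (Fin k) ℝ))
    (μ ν : Measure (EuclideanSpace ℝ (Fin d))) : ℝ≥0∞ :=
  (∫⁻ E, Wp p (μ.map (proj E)) (ν.map (proj E)) ^ p ∂σ) ^ (1 / p)

noncomputable def projL {d k : ℕ} (E : Matrix (Fin d) (Fin k) ℝ) :
    EuclideanSpace ℝ (Fin d) →L[ℝ] EuclideanSpace ℝ (Fin k) :=
  LinearMap.toContinuousLinearMap (Matrix.toEuclideanLin E.transpose)


open Set Metric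

lemma frontier_biUnion_finset_subset {X ι : Type*} [TopologicalSpace X] (J : Finset ι)
    (f : ι → Set X) : frontier (⋃ j ∈ J, f j) ⊆ ⋃ j ∈ J, frontier (f j) := by
  classical
  induction J using Finset.induction_on with
  | empty => simp
  | @insert a J ha ih =>
    rw [Finset.set_biUnion_insert]
    refine (frontier_union_subset _ _).trans ?_
    rw [Finset.set_biUnion_insert]
    refine Set.union_subset ?_ ?_
    · exact (Set.inter_subset_left).trans (Set.subset_union_left)
    · exact (Set.inter_subset_right).trans (Set.Subset.trans ih Set.subset_union_right)

lemma exists_partition {α : Type*} [MeasurableSpace α] [PseudoMetricSpace α]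
    [OpensMeasurableSpace α] [SecondCountableTopology α] [Nonempty α]
    (m : Measure α) [IsFiniteMeasure m] {η : ℝ} (hη : 0 < η) :
    ∃ As : ℕ → Set α, (∀ n, MeasurableSet (As n)) ∧ Pairwise (Function.onFun Disjoint As) ∧
      (⋃ n, As n) = univ ∧ (∀ n, ∀ x ∈ As n, ∀ y ∈ As n, dist x y ≤ η) ∧
      (∀ n, m (frontier (As n)) = 0) := by
  obtain ⟨xs, hxs⟩ := TopologicalSpace.exists_dense_seq α
  have hrad : ∀ n : ℕ, ∃ r : ℝ, r ∈ Ioo (η/3) (η/2) ∧ m (sphere (xs n) r) = 0 := by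
    intro n
    have hcnt : {r : ℝ | 0 < m (sphere (xs n) r)}.Countable := by
      apply Measure.countable_meas_pos_of_disjoint_iUnion
        (As := fun r : ℝ => sphere (xs n) r)
      · exact fun r => isClosed_sphere.measurableSet
      · intro r r' hrr'
        refine Set.disjoint_left.mpr fun z hz hz' => hrr' ?_
        rw [mem_sphere] at hz hz'; rw [← hz, hz']
    by_contra h
    push_neg at h
    have hsub : (Ioo (η/3) (η/2)) ⊆ {r : ℝ | 0 < m (sphere (xs n) r)} := fun r hr =>
      pos_iff_ne_zero.mpr (h r hr)
    have hc : (Ioo (η/3) (η/2)).Countable := hcnt.mono hsub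
    rw [← Cardinal.le_aleph0_iff_set_countable,
      Cardinal.mk_Ioo_real (by linarith : η/3 < η/2)] at hc
    exact absurd hc (by simp [Cardinal.aleph0_lt_continuum.not_ge])
  choose r hr hr0 using hrad
  set Bs : ℕ → Set α := fun n => ball (xs n) (r n) with hBs
  have hBm : ∀ n, MeasurableSet (Bs n) := fun n => measurableSet_ball
  refine ⟨disjointed Bs, fun n => MeasurableSet.disjointed hBm n, disjoint_disjointed Bs,
    ?_, ?_, ?_⟩
  · rw [iUnion_disjointed]
    apply eq_univ_of_forall
    intro y
    obtain ⟨n, hn⟩ := hxs.exists_dist_lt y (by linarith : (0:ℝ) < η/3)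
    exact mem_iUnion.mpr ⟨n, mem_ball.mpr (hn.trans (hr n).1)⟩
  · intro n x hx y hy
    have hx' := disjointed_subset Bs n hx
    have hy' := disjointed_subset Bs n hy
    rw [hBs, mem_ball] at hx' hy'
    have := (hr n).2
    calc dist x y ≤ dist x (xs n) + dist (xs n) y := dist_triangle _ _ _
      _ ≤ r n + r n := by
          rw [dist_comm (xs n) y]; exact add_le_add hx'.le hy'.le
      _ ≤ η := by linarith [(hr n).2]
  · intro n
    have hsub : frontier (disjointed Bs n) ⊆ ⋃ j ∈ Finset.range (n+1), sphere (xs j) (r j) := by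
      have h1 : disjointed Bs n = Bs n \ ⋃ j ∈ Finset.range n, Bs j := by
        rcases n with _ | n
        · simp [disjointed_zero]
        · rw [disjointed_add_one, partialSups_eq_biSup]
          congr 1
          ext z
          simp [Nat.lt_succ_iff]
      rw [h1, Set.diff_eq]
      refine (frontier_inter_subset _ _).trans ?_
      intro z hz
      rcases hz with hz | hz
      · exact Set.mem_biUnion (Finset.self_mem_range_succ n)
          (frontier_ball_subset_sphere hz.1)
      · have := hz.2
        rw [frontier_compl] at this
        obtain ⟨j, hj, hjz⟩ := by
          simpa using frontier_biUnion_finset_subset (Finset.range n) Bs this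
        exact Set.mem_biUnion (Finset.mem_range.mpr (Nat.lt_succ_of_lt hj))
          (frontier_ball_subset_sphere hjz)
    refine measure_mono_null hsub ?_
    refine measure_mono_null (Set.iUnion₂_subset_iUnion _ _) ?_
    rw [measure_iUnion_null_iff]
    exact fun j => hr0 j


section Assemble
variable {α : Type*} [MeasurableSpace α]
    (μ ν : Measure α) [IsProbabilityMeasure μ] [IsProbabilityMeasure ν]
    (A : ℕ → Set α) (x : ℕ × ℕ → ℝ≥0∞)

lemma assemble_marginals (hAm : ∀ n, MeasurableSet (A n)) (hAd : Pairwise (Function.onFun Disjoint A))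
    (hAu : (⋃ n, A n) = univ)
    (hrow : ∀ j, ∑' l, x (j,l) = μ (A j)) (hcol : ∀ l, ∑' j, x (j,l) = ν (A l)) :
    (Measure.sum (fun jl : ℕ×ℕ => (x jl / (μ (A jl.1) * ν (A jl.2))) •
      ((μ.restrict (A jl.1)).prod (ν.restrict (A jl.2))))).map Prod.fst = μ ∧
    (Measure.sum (fun jl : ℕ×ℕ => (x jl / (μ (A jl.1) * ν (A jl.2))) •
      ((μ.restrict (A jl.1)).prod (ν.restrict (A jl.2))))).map Prod.snd = ν := by
  set π : Measure (α × α) := Measure.sum (fun jl : ℕ×ℕ => (x jl / (μ (A jl.1) * ν (A jl.2))) •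
      ((μ.restrict (A jl.1)).prod (ν.restrict (A jl.2)))) with hπ
  have hval : ∀ s t : Set α, MeasurableSet s → MeasurableSet t →
      π (s ×ˢ t) = ∑' jl : ℕ×ℕ, (x jl / (μ (A jl.1) * ν (A jl.2))) *
        (μ (s ∩ A jl.1) * ν (t ∩ A jl.2)) := by
    intro s t hs ht
    rw [hπ, Measure.sum_apply _ (hs.prod ht)]
    congr 1
    funext jl
    rw [Measure.smul_apply, smul_eq_mul, Measure.prod_prod,
      Measure.restrict_apply hs, Measure.restrict_apply ht]
  have hxfin : ∀ jl : ℕ×ℕ, x jl ≠ ⊤ := by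
    intro jl
    have : x jl ≤ μ (A jl.1) := by
      rw [← hrow jl.1]; exact ENNReal.le_tsum jl.2
    exact (this.trans_lt (measure_lt_top μ _)).ne
  -- inner cancellation for rows
  have hrow_cancel : ∀ (j : ℕ) (s : Set α), MeasurableSet s →
      ∑' l, (x (j,l) / (μ (A j) * ν (A l))) * (μ (s ∩ A j) * ν (A l)) = μ (s ∩ A j) := by
    intro j s hs
    by_cases hj : μ (A j) = 0
    · have hsj : μ (s ∩ A j) = 0 :=
        measure_mono_null Set.inter_subset_right hj
      simp [hsj]
    · have hterm : ∀ l, (x (j,l) / (μ (A j) * ν (A l))) * (μ (s ∩ A j) * ν (A l)) =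
          x (j,l) * ((μ (A j))⁻¹ * μ (s ∩ A j)) := by
        intro l
        by_cases hl : ν (A l) = 0
        · have hx0 : x (j,l) = 0 := by
            have : x (j,l) ≤ ν (A l) := by
              rw [← hcol l]; exact ENNReal.le_tsum j
            simpa [hl] using this
          simp [hx0]
        · have hbt : ν (A l) ≠ ⊤ := measure_ne_top ν _
          rw [div_eq_mul_inv, ENNReal.mul_inv (Or.inl hj) (Or.inr hl)]
          calc x (j,l) * ((μ (A j))⁻¹ * (ν (A l))⁻¹) * (μ (s ∩ A j) * ν (A l))
              = x (j,l) * ((μ (A j))⁻¹ * μ (s ∩ A j)) * ((ν (A l))⁻¹ * ν (A l)) := by ring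
            _ = x (j,l) * ((μ (A j))⁻¹ * μ (s ∩ A j)) := by
                rw [ENNReal.inv_mul_cancel hl hbt, mul_one]
      simp_rw [hterm]
      rw [ENNReal.tsum_mul_right, hrow j, ← mul_assoc,
        ENNReal.mul_inv_cancel hj (measure_ne_top μ _), one_mul]
  have hcol_cancel : ∀ (l : ℕ) (t : Set α), MeasurableSet t →
      ∑' j, (x (j,l) / (μ (A j) * ν (A l))) * (μ (A j) * ν (t ∩ A l)) = ν (t ∩ A l) := by
    intro l t ht
    by_cases hl : ν (A l) = 0
    · have htl : ν (t ∩ A l) = 0 :=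
        measure_mono_null Set.inter_subset_right hl
      simp [htl]
    · have hterm : ∀ j, (x (j,l) / (μ (A j) * ν (A l))) * (μ (A j) * ν (t ∩ A l)) =
          x (j,l) * ((ν (A l))⁻¹ * ν (t ∩ A l)) := by
        intro j
        by_cases hj : μ (A j) = 0
        · have hx0 : x (j,l) = 0 := by
            have : x (j,l) ≤ μ (A j) := by
              rw [← hrow j]; exact ENNReal.le_tsum l
            simpa [hj] using this
          simp [hx0]
        · have hat : μ (A j) ≠ ⊤ := measure_ne_top μ _
          rw [div_eq_mul_inv, ENNReal.mul_inv (Or.inl hj) (Or.inr hl)]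
          calc x (j,l) * ((μ (A j))⁻¹ * (ν (A l))⁻¹) * (μ (A j) * ν (t ∩ A l))
              = x (j,l) * ((ν (A l))⁻¹ * ν (t ∩ A l)) * ((μ (A j))⁻¹ * μ (A j)) := by ring
            _ = x (j,l) * ((ν (A l))⁻¹ * ν (t ∩ A l)) := by
                rw [ENNReal.inv_mul_cancel hj hat, mul_one]
      simp_rw [hterm]
      rw [ENNReal.tsum_mul_right, hcol l, ← mul_assoc,
        ENNReal.mul_inv_cancel hl (measure_ne_top ν _), one_mul]
  have hdisj : ∀ s : Set α, Pairwise (Function.onFun Disjoint fun j => s ∩ A j) := by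
    intro s
    exact fun i j hij => (hAd hij).mono Set.inter_subset_right Set.inter_subset_right
  have hsum_inter : ∀ (m' : Measure α) (s : Set α), MeasurableSet s →
      (∀ j, MeasurableSet (A j)) → Pairwise (Function.onFun Disjoint A) → (⋃ n, A n) = univ →
      ∑' j, m' (s ∩ A j) = m' s := by
    intro m' s hs hm hd hu
    rw [← measure_iUnion (hdisj s) (fun j => hs.inter (hm j))]
    congr 1
    rw [← Set.inter_iUnion, hu, Set.inter_univ]
  constructor
  · apply Measure.ext
    intro s hs
    rw [Measure.map_apply measurable_fst hs, ← Set.prod_univ,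
      hval s univ hs MeasurableSet.univ]
    have : ∀ jl : ℕ×ℕ, (x jl / (μ (A jl.1) * ν (A jl.2))) *
        (μ (s ∩ A jl.1) * ν (univ ∩ A jl.2)) = (x jl / (μ (A jl.1) * ν (A jl.2))) *
        (μ (s ∩ A jl.1) * ν (A jl.2)) := by intro jl; rw [Set.univ_inter]
    rw [tsum_congr this, ENNReal.tsum_prod']
    calc ∑' (j) (l), (x (j,l) / (μ (A j) * ν (A l))) * (μ (s ∩ A j) * ν (A l))
        = ∑' j, μ (s ∩ A j) := tsum_congr fun j => hrow_cancel j s hs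
      _ = μ s := hsum_inter μ s hs hAm hAd hAu
  · apply Measure.ext
    intro t ht
    rw [Measure.map_apply measurable_snd ht, ← Set.univ_prod,
      hval univ t MeasurableSet.univ ht]
    have : ∀ jl : ℕ×ℕ, (x jl / (μ (A jl.1) * ν (A jl.2))) *
        (μ (univ ∩ A jl.1) * ν (t ∩ A jl.2)) = (x jl / (μ (A jl.1) * ν (A jl.2))) *
        (μ (A jl.1) * ν (t ∩ A jl.2)) := by intro jl; rw [Set.univ_inter]
    rw [tsum_congr this, ENNReal.tsum_prod', ENNReal.tsum_comm]
    calc ∑' (l) (j), (x (j,l) / (μ (A j) * ν (A l))) * (μ (A j) * ν (t ∩ A l))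
        = ∑' l, ν (t ∩ A l) := tsum_congr fun l => hcol_cancel l t ht
      _ = ν t := hsum_inter ν t ht hAm hAd hAu
end Assemble


lemma ennreal_div_mul_le (y a : ℝ≥0∞) : y / a * a ≤ y := by
  rcases eq_or_ne a 0 with rfl | h0
  · simp
  rcases eq_or_ne a ⊤ with rfl | ht
  · simp [ENNReal.div_top]
  · exact le_of_eq (ENNReal.div_mul_cancel h0 ht)

lemma rineq {p ε d : ℝ} (hp : 1 ≤ p) (hε : 0 < ε) (hε1 : ε ≤ 1) (hd : 0 ≤ d) :
    (d + 2*(ε^2/4))^p ≤ (1+ε)^p * d^p + ε^p := by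
  rcases le_or_gt (2*(ε^2/4)) (ε*d) with h | h
  · have h1 : d + 2*(ε^2/4) ≤ (1+ε)*d := by nlinarith
    calc (d + 2*(ε^2/4))^p ≤ ((1+ε)*d)^p :=
          Real.rpow_le_rpow (by positivity) h1 (by linarith)
      _ = (1+ε)^p * d^p := Real.mul_rpow (by positivity) hd
      _ ≤ _ := le_add_of_nonneg_right (Real.rpow_nonneg hε.le p)
  · have h1 : d + 2*(ε^2/4) ≤ ε := by nlinarith
    calc (d + 2*(ε^2/4))^p ≤ ε^p := Real.rpow_le_rpow (by positivity) h1 (by linarith)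
      _ ≤ _ := le_add_of_nonneg_left (by positivity)

lemma assemble_cost {α : Type*} [MeasurableSpace α]
    (μ ν : Measure α) [IsProbabilityMeasure μ] [IsProbabilityMeasure ν]
    (A : ℕ → Set α) (x : ℕ × ℕ → ℝ≥0∞) (hAm : ∀ n, MeasurableSet (A n))
    (c : α × α → ℝ≥0∞) (Cb : ℕ × ℕ → ℝ≥0∞)
    (hc_ub : ∀ jl : ℕ × ℕ, ∀ z ∈ (A jl.1) ×ˢ (A jl.2), c z ≤ Cb jl) :
    ∫⁻ z, c z ∂(Measure.sum (fun jl : ℕ×ℕ => (x jl / (μ (A jl.1) * ν (A jl.2))) •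
      ((μ.restrict (A jl.1)).prod (ν.restrict (A jl.2))))) ≤ ∑' jl : ℕ×ℕ, Cb jl * x jl := by
  rw [lintegral_sum_measure]
  refine ENNReal.tsum_le_tsum fun jl => ?_
  rw [lintegral_smul_measure, Measure.prod_restrict]
  calc (x jl / (μ (A jl.1) * ν (A jl.2))) *
        ∫⁻ z in (A jl.1) ×ˢ (A jl.2), c z ∂(μ.prod ν)
      ≤ (x jl / (μ (A jl.1) * ν (A jl.2))) *
        ∫⁻ _ in (A jl.1) ×ˢ (A jl.2), Cb jl ∂(μ.prod ν) :=
        mul_le_mul_right (setLIntegral_mono measurable_const (hc_ub jl)) _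
    _ = Cb jl * ((x jl / (μ (A jl.1) * ν (A jl.2))) * (μ (A jl.1) * ν (A jl.2))) := by
        rw [setLIntegral_const, Measure.prod_prod]; ring
    _ ≤ Cb jl * x jl := mul_le_mul_right (ennreal_div_mul_le _ _) _



noncomputable def TCost {α : Type*} [MeasurableSpace α] [PseudoMetricSpace α]
    (p : ℝ) (μ ν : Measure α) : ℝ≥0∞ :=
  ⨅ π ∈ {π : Measure (α × α) | π.map Prod.fst = μ ∧ π.map Prod.snd = ν},
    ∫⁻ z, ENNReal.ofReal (dist z.1 z.2 ^ p) ∂π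

section Big
variable {α : Type*} [MeasurableSpace α] [PseudoMetricSpace α]
    [OpensMeasurableSpace α] [SecondCountableTopology α] [Nonempty α]

lemma TCost_le_of_freq {p : ℝ} (hp : 1 ≤ p) {μs νs : ℕ → Measure α} {μ ν : Measure α}
    [∀ i, IsProbabilityMeasure (μs i)] [∀ i, IsProbabilityMeasure (νs i)]
    [IsProbabilityMeasure μ] [IsProbabilityMeasure ν]
    (hμ : WeakConv μs μ) (hν : WeakConv νs ν) {b : ℝ≥0∞} (hbtop : b ≠ ⊤)
    (hfreq : ∃ᶠ i in atTop, TCost p (μs i) (νs i) < b) :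
    TCost p μ ν ≤ b := by
  classical
  haveI hne : (atTop ⊓ 𝓟 {i | TCost p (μs i) (νs i) < b}).NeBot :=
    frequently_iff_neBot.mp hfreq
  set U : Ultrafilter ℕ := Ultrafilter.of (atTop ⊓ 𝓟 {i | TCost p (μs i) (νs i) < b}) with hU
  have hUle : (U : Filter ℕ) ≤ atTop := (Ultrafilter.of_le _).trans inf_le_left
  have hUS : {i | TCost p (μs i) (νs i) < b} ∈ U :=
    ((Ultrafilter.of_le _).trans inf_le_right) (mem_principal_self _)
  -- choose couplings
  have hex : ∀ i, ∃ π : Measure (α × α), (π.map Prod.fst = μs i ∧ π.map Prod.snd = νs i) ∧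
      (TCost p (μs i) (νs i) < b → ∫⁻ z, ENNReal.ofReal (dist z.1 z.2 ^ p) ∂π ≤ b) := by
    intro i
    by_cases h : TCost p (μs i) (νs i) < b
    · have h' := h
      rw [TCost] at h'
      simp only [iInf_lt_iff, mem_setOf_eq] at h'
      obtain ⟨π, hπ, hcost⟩ := h'
      exact ⟨π, hπ, fun _ => hcost.le⟩
    · exact ⟨(μs i).prod (νs i), ⟨by simp, by simp⟩, fun hc => absurd hc h⟩
  choose πs hπm hπc using hex
  haveI hπprob : ∀ i, IsProbabilityMeasure (πs i) := by
    intro i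
    constructor
    have h1 : ((πs i).map Prod.fst) Set.univ = 1 := by rw [(hπm i).1]; exact measure_univ
    rwa [Measure.map_apply measurable_fst MeasurableSet.univ, Set.preimage_univ] at h1
  have hrect_fst : ∀ i (s : Set α), MeasurableSet s → πs i (s ×ˢ univ) = μs i s := by
    intro i s hs
    rw [Set.prod_univ, ← Measure.map_apply measurable_fst hs, (hπm i).1]
  have hrect_snd : ∀ i (t : Set α), MeasurableSet t → πs i (univ ×ˢ t) = νs i t := by
    intro i t ht
    rw [Set.univ_prod, ← Measure.map_apply measurable_snd ht, (hπm i).2]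
  -- portmanteau along U
  have hμT : ∀ {s : Set α}, μ (frontier s) = 0 →
      Tendsto (fun i => μs i s) (U : Filter ℕ) (𝓝 (μ s)) := by
    intro s hs
    have h1 := (ProbabilityMeasure.tendsto_iff_forall_integral_tendsto
      (μs := fun i => (⟨μs i, inferInstance⟩ : ProbabilityMeasure α))
      (μ := (⟨μ, inferInstance⟩ : ProbabilityMeasure α)) (F := atTop)).mpr fun f => hμ f
    exact (ProbabilityMeasure.tendsto_measure_of_null_frontier_of_tendsto' h1 hs).mono_left hUle
  have hνT : ∀ {s : Set α}, ν (frontier s) = 0 →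
      Tendsto (fun i => νs i s) (U : Filter ℕ) (𝓝 (ν s)) := by
    intro s hs
    have h1 := (ProbabilityMeasure.tendsto_iff_forall_integral_tendsto
      (μs := fun i => (⟨νs i, inferInstance⟩ : ProbabilityMeasure α))
      (μ := (⟨ν, inferInstance⟩ : ProbabilityMeasure α)) (F := atTop)).mpr fun f => hν f
    exact (ProbabilityMeasure.tendsto_measure_of_null_frontier_of_tendsto' h1 hs).mono_left hUle
  -- the ε-quantitative bound
  have key : ∀ ε : ℝ, 0 < ε → ε ≤ 1 →
      TCost p μ ν ≤ ENNReal.ofReal ((1+ε)^p) * b + ENNReal.ofReal (ε^p) := by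
    intro ε hε hε1
    set η : ℝ := ε^2/4 with hηdef
    have hη : 0 < η := by positivity
    obtain ⟨A, hAm, hAd, hAu, hAdiam, hAfr⟩ := exists_partition (μ + ν) hη
    have hμfr : ∀ n, μ (frontier (A n)) = 0 := by
      intro n
      have := hAfr n
      rw [Measure.add_apply] at this
      exact (add_eq_zero.mp this).1
    have hνfr : ∀ n, ν (frontier (A n)) = 0 := by
      intro n
      have := hAfr n
      rw [Measure.add_apply] at this
      exact (add_eq_zero.mp this).2
    have hfinfr : ∀ (m' : Measure α), (∀ n, m' (frontier (A n)) = 0) →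
        ∀ J : Finset ℕ, m' (frontier (⋃ j ∈ J, A j)) = 0 := by
      intro m' hm' J
      refine measure_mono_null (frontier_biUnion_finset_subset J A) ?_
      refine measure_mono_null (Set.iUnion₂_subset_iUnion _ _) ?_
      rw [measure_iUnion_null_iff]
      exact fun j => hm' j
    set B : ℕ×ℕ → Set (α×α) := fun jl => (A jl.1) ×ˢ (A jl.2) with hBdef
    have hBm : ∀ jl, MeasurableSet (B jl) := fun jl => (hAm jl.1).prod (hAm jl.2)
    have hBd : Pairwise (Function.onFun Disjoint B) := by
      intro jl jl' hne'
      rcases Prod.ext_iff.not.mp hne' |> not_and_or.mp with h | h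
      · exact Set.disjoint_left.mpr fun z hz hz' =>
          Set.disjoint_left.mp (hAd h) hz.1 hz'.1
      · exact Set.disjoint_left.mpr fun z hz hz' =>
          Set.disjoint_left.mp (hAd h) hz.2 hz'.2
    -- ultrafilter limit of block masses
    obtain ⟨x, -, hx⟩ := isCompact_univ.ultrafilter_le_nhds
      (U.map (fun i (jl : ℕ×ℕ) => πs i (B jl))) (le_principal_iff.mpr univ_mem)
    have hxc : ∀ jl : ℕ×ℕ, Tendsto (fun i => πs i (B jl)) (U : Filter ℕ) (𝓝 (x jl)) := by
      rw [Ultrafilter.coe_map] at hx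
      exact fun jl => tendsto_pi_nhds.mp hx jl
    -- row and column partial bounds
    have hrow_le : ∀ j, ∑' l, x (j,l) ≤ μ (A j) := by
      intro j
      rw [ENNReal.tsum_eq_iSup_sum]
      refine iSup_le fun F => ?_
      have h1 : Tendsto (fun i => ∑ l ∈ F, πs i (B (j,l))) (U : Filter ℕ)
          (𝓝 (∑ l ∈ F, x (j,l))) := tendsto_finset_sum F fun l _ => hxc (j,l)
      refine le_of_tendsto_of_tendsto' h1 (hμT (hμfr j)) fun i => ?_
      rw [← measure_biUnion_finset (f := fun l => B (j,l)) (s := F)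
        (fun a _ c _ hac => hBd (fun h => hac (congrArg Prod.snd h)))
        (fun l _ => hBm (j,l)), ← hrect_fst i (A j) (hAm j)]
      refine measure_mono ?_
      refine Set.iUnion₂_subset fun l _ => ?_
      exact Set.prod_mono_right (Set.subset_univ _)
    have hcol_le : ∀ l, ∑' j, x (j,l) ≤ ν (A l) := by
      intro l
      rw [ENNReal.tsum_eq_iSup_sum]
      refine iSup_le fun F => ?_
      have h1 : Tendsto (fun i => ∑ j ∈ F, πs i (B (j,l))) (U : Filter ℕ)
          (𝓝 (∑ j ∈ F, x (j,l))) := tendsto_finset_sum F fun j _ => hxc (j,l)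
      refine le_of_tendsto_of_tendsto' h1 (hνT (hνfr l)) fun i => ?_
      rw [← measure_biUnion_finset (f := fun j => B (j,l)) (s := F)
        (fun a _ c _ hac => hBd (fun h => hac (congrArg Prod.fst h)))
        (fun j _ => hBm (j,l)), ← hrect_snd i (A l) (hAm l)]
      refine measure_mono ?_
      refine Set.iUnion₂_subset fun j _ => ?_
      exact Set.prod_mono_left (Set.subset_univ _)
    -- total mass at least one
    have htot : (1:ℝ≥0∞) ≤ ∑' jl : ℕ×ℕ, x jl := by
      set UN : ℕ → Set α := fun N => ⋃ j ∈ Finset.range N, A j with hUNdef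
      have hUNm : ∀ N, MeasurableSet (UN N) := fun N => Finset.measurableSet_biUnion _
        (fun j _ => hAm j)
      have hUNfr : ∀ N, μ (frontier ((UN N)ᶜ)) = 0 := by
        intro N; rw [frontier_compl]; exact hfinfr μ hμfr _
      have hUNfrν : ∀ N, ν (frontier ((UN N)ᶜ)) = 0 := by
        intro N; rw [frontier_compl]; exact hfinfr ν hνfr _
      have hineq : ∀ N, (1:ℝ≥0∞) ≤ (∑ jl ∈ Finset.range N ×ˢ Finset.range N, x jl)
          + (μ ((UN N)ᶜ) + ν ((UN N)ᶜ)) := by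
        intro N
        have hT : Tendsto (fun i => (∑ jl ∈ Finset.range N ×ˢ Finset.range N, πs i (B jl))
            + (μs i ((UN N)ᶜ) + νs i ((UN N)ᶜ))) (U : Filter ℕ)
            (𝓝 ((∑ jl ∈ Finset.range N ×ˢ Finset.range N, x jl)
              + (μ ((UN N)ᶜ) + ν ((UN N)ᶜ)))) :=
          (tendsto_finset_sum _ fun jl _ => hxc jl).add ((hμT (hUNfr N)).add (hνT (hUNfrν N)))
        refine le_of_tendsto_of_tendsto' tendsto_const_nhds hT fun i => ?_
        have hcover : (univ : Set (α×α)) ⊆ ((UN N) ×ˢ (UN N)) ∪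
            (((UN N)ᶜ ×ˢ univ) ∪ (univ ×ˢ (UN N)ᶜ)) := by
          intro z _
          by_cases h1 : z.1 ∈ UN N
          · by_cases h2 : z.2 ∈ UN N
            · exact Or.inl ⟨h1, h2⟩
            · exact Or.inr (Or.inr ⟨trivial, h2⟩)
          · exact Or.inr (Or.inl ⟨h1, trivial⟩)
        have hBU : (UN N) ×ˢ (UN N) = ⋃ jl ∈ Finset.range N ×ˢ Finset.range N, B jl := by
          ext z
          constructor
          · rintro ⟨h1, h2⟩
            obtain ⟨j, hj, hzj⟩ := Set.mem_iUnion₂.mp h1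
            obtain ⟨l, hl, hzl⟩ := Set.mem_iUnion₂.mp h2
            exact Set.mem_iUnion₂.mpr ⟨(j,l), Finset.mem_product.mpr ⟨hj, hl⟩, hzj, hzl⟩
          · rintro hz
            obtain ⟨jl, hjl, hzj, hzl⟩ := Set.mem_iUnion₂.mp hz
            exact ⟨Set.mem_iUnion₂.mpr ⟨jl.1, (Finset.mem_product.mp hjl).1, hzj⟩,
              Set.mem_iUnion₂.mpr ⟨jl.2, (Finset.mem_product.mp hjl).2, hzl⟩⟩
        calc (1:ℝ≥0∞) = πs i univ := measure_univ.symm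
          _ ≤ πs i ((UN N) ×ˢ (UN N)) + (πs i ((UN N)ᶜ ×ˢ univ) + πs i (univ ×ˢ (UN N)ᶜ)) := by
              refine (measure_mono hcover).trans ?_
              refine (measure_union_le _ _).trans ?_
              exact add_le_add_right (measure_union_le _ _) _
          _ = (∑ jl ∈ Finset.range N ×ˢ Finset.range N, πs i (B jl))
              + (μs i ((UN N)ᶜ) + νs i ((UN N)ᶜ)) := by
              rw [hBU, measure_biUnion_finset (fun a _ c _ hac => hBd hac)
                (fun jl _ => hBm jl), hrect_fst i _ (hUNm N).compl,
                hrect_snd i _ (hUNm N).compl]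
      have hUNcompl : Tendsto (fun N => μ ((UN N)ᶜ) + ν ((UN N)ᶜ)) atTop (𝓝 0) := by
        have hmono : Antitone (fun N => (UN N)ᶜ) := by
          intro N M hNM
          apply Set.compl_subset_compl.mpr
          refine Set.biUnion_subset_biUnion_left ?_
          exact Finset.range_subset_range.mpr hNM
        have hInter : ⋂ N, (UN N)ᶜ = ∅ := by
          rw [← Set.compl_iUnion]
          rw [Set.compl_empty_iff]
          apply Set.eq_univ_of_forall
          intro z
          have hz : z ∈ ⋃ n, A n := by rw [hAu]; trivial
          obtain ⟨n, hn⟩ := Set.mem_iUnion.mp hz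
          refine Set.mem_iUnion.mpr ⟨n+1, ?_⟩
          exact Set.mem_biUnion (Finset.self_mem_range_succ n) hn
        have h1 : Tendsto (fun N => μ ((UN N)ᶜ)) atTop (𝓝 0) := by
          have := MeasureTheory.tendsto_measure_iInter_atTop
            (μ := μ) (fun N => ((hUNm N).compl).nullMeasurableSet) hmono
            ⟨0, measure_ne_top μ _⟩
          rwa [hInter, measure_empty] at this
        have h2 : Tendsto (fun N => ν ((UN N)ᶜ)) atTop (𝓝 0) := by
          have := MeasureTheory.tendsto_measure_iInter_atTop
            (μ := ν) (fun N => ((hUNm N).compl).nullMeasurableSet) hmono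
            ⟨0, measure_ne_top ν _⟩
          rwa [hInter, measure_empty] at this
        simpa using h1.add h2
      have hT2 : Tendsto (fun N => (∑' jl : ℕ×ℕ, x jl) + (μ ((UN N)ᶜ) + ν ((UN N)ᶜ)))
          atTop (𝓝 ((∑' jl : ℕ×ℕ, x jl) + 0)) := tendsto_const_nhds.add hUNcompl
      have hfin : (1:ℝ≥0∞) ≤ (∑' jl : ℕ×ℕ, x jl) + 0 := by
        refine le_of_tendsto_of_tendsto' tendsto_const_nhds hT2 fun N => ?_
        refine (hineq N).trans (add_le_add_left ?_ _)
        exact ENNReal.sum_le_tsum _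
      simpa using hfin
    -- exact marginals
    have htsum_rows : ∑' jl : ℕ×ℕ, x jl = ∑' (j) (l), x (j,l) := ENNReal.tsum_prod'
    have hμsum : ∑' j, μ (A j) = 1 := by
      rw [← measure_iUnion hAd hAm, hAu]; exact measure_univ
    have hνsum : ∑' l, ν (A l) = 1 := by
      rw [← measure_iUnion hAd hAm, hAu]; exact measure_univ
    have hle1 : ∑' (j) (l), x (j,l) ≤ 1 := by
      rw [← hμsum]; exact ENNReal.tsum_le_tsum hrow_le
    have hrow : ∀ j, ∑' l, x (j,l) = μ (A j) := by
      by_contra hcon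
      push_neg at hcon
      obtain ⟨j0, hj0⟩ := hcon
      have hlt : ∑' (j) (l), x (j,l) < ∑' j, μ (A j) :=
        ENNReal.tsum_lt_tsum (hle1.trans_lt (by norm_num)).ne hrow_le
          (lt_of_le_of_ne (hrow_le j0) hj0)
      rw [hμsum] at hlt
      exact absurd (htot.trans_eq htsum_rows) (not_le.mpr hlt)
    have hxtot : ∑' jl : ℕ×ℕ, x jl = 1 := le_antisymm (htsum_rows ▸ hle1) htot
    have htsum_cols : ∑' jl : ℕ×ℕ, x jl = ∑' (l) (j), x (j,l) := by
      rw [ENNReal.tsum_prod']; exact ENNReal.tsum_comm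
    have hcol : ∀ l, ∑' j, x (j,l) = ν (A l) := by
      by_contra hcon
      push_neg at hcon
      obtain ⟨l0, hl0⟩ := hcon
      have hle1' : ∑' (l) (j), x (j,l) ≤ 1 := by
        rw [← hνsum]; exact ENNReal.tsum_le_tsum hcol_le
      have hlt : ∑' (l) (j), x (j,l) < ∑' l, ν (A l) :=
        ENNReal.tsum_lt_tsum (hle1'.trans_lt (by norm_num)).ne hcol_le
          (lt_of_le_of_ne (hcol_le l0) hl0)
      rw [hνsum] at hlt
      exact absurd (htot.trans_eq htsum_cols) (not_le.mpr hlt)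
    -- cost data
    set cst : α × α → ℝ≥0∞ := fun z => ENNReal.ofReal (dist z.1 z.2 ^ p) with hcst
    have hcst_meas : Measurable cst := by
      have h1 : Measurable fun z : α×α => dist z.1 z.2 :=
        (continuous_fst.dist continuous_snd).measurable
      exact (h1.pow_const p).ennreal_ofReal
    set dL : ℕ×ℕ → ℝ := fun jl => sInf ((fun z : α×α => dist z.1 z.2) '' (B jl)) with hdL
    have hdL0 : ∀ jl, 0 ≤ dL jl := by
      intro jl
      apply Real.sInf_nonneg
      rintro w ⟨z, -, rfl⟩
      exact dist_nonneg
    set C : ℕ×ℕ → ℝ≥0∞ := fun jl => ENNReal.ofReal (dL jl ^ p) with hC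
    have hC_le : ∀ jl : ℕ×ℕ, ∀ z ∈ B jl, C jl ≤ cst z := by
      intro jl z hz
      apply ENNReal.ofReal_le_ofReal
      refine Real.rpow_le_rpow (hdL0 jl) ?_ (by linarith)
      exact csInf_le ⟨0, by rintro w ⟨z', -, rfl⟩; exact dist_nonneg⟩ ⟨z, hz, rfl⟩
    have hcost : ∑' jl : ℕ×ℕ, C jl * x jl ≤ b := by
      rw [ENNReal.tsum_eq_iSup_sum]
      refine iSup_le fun F => ?_
      have hT : Tendsto (fun i => ∑ jl ∈ F, C jl * πs i (B jl)) (U : Filter ℕ)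
          (𝓝 (∑ jl ∈ F, C jl * x jl)) :=
        tendsto_finset_sum F fun jl _ =>
          ENNReal.Tendsto.const_mul (hxc jl) (Or.inr ENNReal.ofReal_ne_top)
      refine le_of_tendsto hT ?_
      filter_upwards [hUS] with i hi
      calc ∑ jl ∈ F, C jl * πs i (B jl)
          = ∑ jl ∈ F, ∫⁻ _ in B jl, C jl ∂(πs i) := by
            refine Finset.sum_congr rfl fun jl _ => ?_
            rw [setLIntegral_const]
        _ ≤ ∑ jl ∈ F, ∫⁻ z in B jl, cst z ∂(πs i) :=
            Finset.sum_le_sum fun jl _ => setLIntegral_mono hcst_meas (hC_le jl)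
        _ = ∫⁻ z in ⋃ jl ∈ F, B jl, cst z ∂(πs i) :=
            (lintegral_biUnion_finset (fun a _ c _ hac => hBd hac)
              (fun jl _ => hBm jl) cst).symm
        _ ≤ ∫⁻ z, cst z ∂(πs i) := setLIntegral_le_lintegral _ _
        _ ≤ b := hπc i hi
    -- upper bound on per-block cost
    set Cb : ℕ×ℕ → ℝ≥0∞ := fun jl => ENNReal.ofReal ((dL jl + 2*η) ^ p) with hCb
    have hc_ub : ∀ jl : ℕ×ℕ, ∀ z ∈ B jl, cst z ≤ Cb jl := by
      intro jl z hz
      apply ENNReal.ofReal_le_ofReal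
      refine Real.rpow_le_rpow dist_nonneg ?_ (by linarith)
      have h2 : dist z.1 z.2 - 2*η ≤ dL jl := by
        refine le_csInf ⟨dist z.1 z.2, ⟨z, hz, rfl⟩⟩ ?_
        rintro w ⟨z', hz', rfl⟩
        have d1 : dist z.1 z'.1 ≤ η := hAdiam jl.1 _ hz.1 _ hz'.1
        have d2 : dist z'.2 z.2 ≤ η := hAdiam jl.2 _ hz'.2 _ hz.2
        have d3 := dist_triangle4 z.1 z'.1 z'.2 z.2
        linarith
      linarith
    -- assemble the coupling
    set πinf : Measure (α × α) := Measure.sum (fun jl : ℕ×ℕ =>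
      (x jl / (μ (A jl.1) * ν (A jl.2))) •
      ((μ.restrict (A jl.1)).prod (ν.restrict (A jl.2)))) with hπinf
    obtain ⟨hm1, hm2⟩ := assemble_marginals μ ν A x hAm hAd hAu hrow hcol
    have hcost_le : ∫⁻ z, cst z ∂πinf ≤ ∑' jl : ℕ×ℕ, Cb jl * x jl :=
      assemble_cost μ ν A x hAm cst Cb hc_ub
    have hCble : ∀ jl, Cb jl ≤ ENNReal.ofReal ((1+ε)^p) * C jl + ENNReal.ofReal (ε^p) := by
      intro jl
      have hr := rineq hp hε hε1 (hdL0 jl)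
      calc Cb jl ≤ ENNReal.ofReal ((1+ε)^p * dL jl ^ p + ε^p) :=
            ENNReal.ofReal_le_ofReal hr
        _ = ENNReal.ofReal ((1+ε)^p) * C jl + ENNReal.ofReal (ε^p) := by
            rw [ENNReal.ofReal_add (mul_nonneg (Real.rpow_nonneg (by linarith) p)
                (Real.rpow_nonneg (hdL0 jl) p)) (Real.rpow_nonneg hε.le p),
              ENNReal.ofReal_mul (Real.rpow_nonneg (by linarith) p)]
    have hfinal : ∫⁻ z, cst z ∂πinf ≤ ENNReal.ofReal ((1+ε)^p) * b + ENNReal.ofReal (ε^p) := by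
      refine hcost_le.trans ?_
      calc ∑' jl : ℕ×ℕ, Cb jl * x jl
          ≤ ∑' jl : ℕ×ℕ, (ENNReal.ofReal ((1+ε)^p) * (C jl * x jl)
            + ENNReal.ofReal (ε^p) * x jl) := by
            refine ENNReal.tsum_le_tsum fun jl => ?_
            calc Cb jl * x jl ≤ (ENNReal.ofReal ((1+ε)^p) * C jl + ENNReal.ofReal (ε^p)) * x jl :=
                  mul_le_mul_left (hCble jl) _
              _ = ENNReal.ofReal ((1+ε)^p) * (C jl * x jl) + ENNReal.ofReal (ε^p) * x jl := by
                  ring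
        _ = ENNReal.ofReal ((1+ε)^p) * (∑' jl : ℕ×ℕ, C jl * x jl)
            + ENNReal.ofReal (ε^p) * (∑' jl : ℕ×ℕ, x jl) := by
            rw [ENNReal.tsum_add, ENNReal.tsum_mul_left, ENNReal.tsum_mul_left]
        _ ≤ ENNReal.ofReal ((1+ε)^p) * b + ENNReal.ofReal (ε^p) := by
            rw [hxtot, mul_one]
            exact add_le_add_left (mul_le_mul_right hcost _) _
    refine le_trans ?_ hfinal
    exact iInf₂_le πinf ⟨hm1, hm2⟩
  -- pass to the limit ε → 0
  have hseq : Tendsto (fun n : ℕ => ENNReal.ofReal ((1+1/(n+1:ℝ))^p) * b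
      + ENNReal.ofReal ((1/(n+1:ℝ))^p)) atTop (𝓝 (1 * b + 0)) := by
    have hu : Tendsto (fun n : ℕ => 1/(n+1:ℝ)) atTop (𝓝 0) :=
      tendsto_one_div_add_atTop_nhds_zero_nat
    have h1 : Tendsto (fun n : ℕ => ENNReal.ofReal ((1+1/(n+1:ℝ))^p)) atTop (𝓝 1) := by
      have hc1 : ContinuousAt (fun t : ℝ => t ^ p) 1 :=
        Real.continuousAt_rpow_const 1 p (Or.inl one_ne_zero)
      have h2 : Tendsto (fun n : ℕ => (1+1/(n+1:ℝ))^p) atTop (𝓝 1) := by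
        have h3 : Tendsto (fun n : ℕ => 1+1/(n+1:ℝ)) atTop (𝓝 1) := by
          simpa using (tendsto_const_nhds (x := (1:ℝ))).add hu
        have := hc1.tendsto.comp h3
        simpa [Function.comp_def] using this
      have := (ENNReal.continuous_ofReal.tendsto 1).comp h2
      simpa [Function.comp_def] using this
    have h4 : Tendsto (fun n : ℕ => ENNReal.ofReal ((1/(n+1:ℝ))^p)) atTop (𝓝 0) := by
      have hc0 : ContinuousAt (fun t : ℝ => t ^ p) 0 :=
        Real.continuousAt_rpow_const 0 p (Or.inr (by linarith))
      have h2 : Tendsto (fun n : ℕ => (1/(n+1:ℝ))^p) atTop (𝓝 0) := by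
        have := hc0.tendsto.comp hu
        simpa [Function.comp_def, Real.zero_rpow (by linarith : p ≠ 0)] using this
      have := (ENNReal.continuous_ofReal.tendsto 0).comp h2
      simpa [Function.comp_def] using this
    exact (ENNReal.Tendsto.mul_const h1 (Or.inr hbtop)).add h4
  have hle : TCost p μ ν ≤ 1 * b + 0 := by
    refine ge_of_tendsto hseq ?_
    filter_upwards with n
    have hn1 : (0:ℝ) < 1/(n+1:ℝ) := by positivity
    have hn2 : (1:ℝ)/(n+1:ℝ) ≤ 1 := by
      rw [div_le_one (by positivity)]
      linarith [Nat.cast_nonneg (α := ℝ) n]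
    exact key _ hn1 hn2
  simpa using hle
end Big


lemma Wp_eq_TCost {α : Type*} [MeasurableSpace α] [PseudoMetricSpace α] {p : ℝ} (hp : 0 < p)
    (μ ν : Measure α) : Wp p μ ν = TCost p μ ν ^ (1/p) := by
  have h1p : 0 < 1/p := by positivity
  have he : ∀ y : ℝ≥0∞, y ^ (1/p) = ENNReal.orderIsoRpow (1/p) h1p y := fun y => rfl
  rw [Wp, TCost]
  simp_rw [he]
  rw [eq_comm, OrderIso.map_iInf]
  exact iInf_congr fun π => OrderIso.map_iInf _ _

lemma Wp_lsc {α : Type*} [MeasurableSpace α] [PseudoMetricSpace α]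
    [OpensMeasurableSpace α] [SecondCountableTopology α] [Nonempty α]
    {p : ℝ} (hp : 1 ≤ p) {μs νs : ℕ → Measure α} {μ ν : Measure α}
    [∀ i, IsProbabilityMeasure (μs i)] [∀ i, IsProbabilityMeasure (νs i)]
    [IsProbabilityMeasure μ] [IsProbabilityMeasure ν]
    (hμ : WeakConv μs μ) (hν : WeakConv νs ν) :
    Wp p μ ν ≤ liminf (fun i => Wp p (μs i) (νs i)) atTop := by
  have hp0 : 0 < p := lt_of_lt_of_le one_pos hp
  have h1p : 0 < 1/p := by positivity
  have hT : TCost p μ ν ≤ liminf (fun i => TCost p (μs i) (νs i)) atTop := by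
    by_contra hcon
    push_neg at hcon
    obtain ⟨b, hb1, hb2⟩ := exists_between hcon
    have hbtop : b ≠ ⊤ := (hb2.trans_le le_top).ne
    have hfreq : ∃ᶠ i in atTop, TCost p (μs i) (νs i) < b :=
      frequently_lt_of_liminf_lt (by isBoundedDefault) hb1
    exact absurd (TCost_le_of_freq hp hμ hν hbtop hfreq) (not_le.mpr hb2)
  have hfun : (fun i => TCost p (μs i) (νs i) ^ (1/p)) = fun i => Wp p (μs i) (νs i) :=
    funext fun i => (Wp_eq_TCost hp0 _ _).symm
  calc Wp p μ ν = TCost p μ ν ^ (1/p) := Wp_eq_TCost hp0 μ ν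
    _ ≤ (liminf (fun i => TCost p (μs i) (νs i)) atTop) ^ (1/p) :=
        ENNReal.rpow_le_rpow hT h1p.le
    _ = liminf (fun i => TCost p (μs i) (νs i) ^ (1/p)) atTop :=
        OrderIso.liminf_apply (ENNReal.orderIsoRpow (1/p) h1p)
    _ = liminf (fun i => Wp p (μs i) (νs i)) atTop := by rw [hfun]

theorem stmt8 {d : ℕ} (k : ℕ) (p : ℝ) (hp : 1 ≤ p)
    (μs νs : ℕ → Measure (EuclideanSpace ℝ (Fin d)))
    (μ ν : Measure (EuclideanSpace ℝ (Fin d)))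
    [∀ i, IsProbabilityMeasure (μs i)] [∀ i, IsProbabilityMeasure (νs i)]
    [IsProbabilityMeasure μ] [IsProbabilityMeasure ν]
    (hμ : WeakConv μs μ) (hν : WeakConv νs ν) :
    PRW p k μ ν ≤ liminf (fun i => PRW p k (μs i) (νs i)) atTop := by
  have hp0 : 0 < p := lt_of_lt_of_le one_pos hp
  simp only [PRW]
  refine iSup₂_le fun E hE => ?_
  have hproj_eq : proj E = ⇑(Matrix.toEuclideanLin E.transpose) := by
    funext x'
    simp [proj, Matrix.toEuclideanLin, Matrix.toLpLin_apply]
  have hcont : Continuous (proj E) := by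
    rw [hproj_eq]
    exact LinearMap.continuous_of_finiteDimensional _
  have hmeas : Measurable (proj E) := hcont.measurable
  haveI h1 : ∀ i, IsProbabilityMeasure ((μs i).map (proj E)) := fun i =>
    Measure.isProbabilityMeasure_map hmeas.aemeasurable
  haveI h2 : ∀ i, IsProbabilityMeasure ((νs i).map (proj E)) := fun i =>
    Measure.isProbabilityMeasure_map hmeas.aemeasurable
  haveI h3 : IsProbabilityMeasure (μ.map (proj E)) :=
    Measure.isProbabilityMeasure_map hmeas.aemeasurable
  haveI h4 : IsProbabilityMeasure (ν.map (proj E)) :=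
    Measure.isProbabilityMeasure_map hmeas.aemeasurable
  have hint : ∀ (f : EuclideanSpace ℝ (Fin k) →ᵇ ℝ) (m : Measure (EuclideanSpace ℝ (Fin d))),
      ∫ x, f x ∂(m.map (proj E)) = ∫ x, (f.compContinuous ⟨proj E, hcont⟩) x ∂m := by
    intro f m
    rw [MeasureTheory.integral_map hmeas.aemeasurable
      f.continuous.measurable.aestronglyMeasurable]
    rfl
  have hμE : WeakConv (fun i => (μs i).map (proj E)) (μ.map (proj E)) := by
    intro f
    simp_rw [hint f]
    exact hμ (f.compContinuous ⟨proj E, hcont⟩)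
  have hνE : WeakConv (fun i => (νs i).map (proj E)) (ν.map (proj E)) := by
    intro f
    simp_rw [hint f]
    exact hν (f.compContinuous ⟨proj E, hcont⟩)
  have hmain := Wp_lsc hp hμE hνE
  refine hmain.trans (liminf_le_liminf (Eventually.of_forall fun i => ?_))
  show Wp p ((μs i).map (proj E)) ((νs i).map (proj E)) ≤ PRW p k (μs i) (νs i)
  rw [PRW]
  exact le_iSup₂ (f := fun E (_ : E ∈ Stiefel d k) =>
    Wp p ((μs i).map (proj E)) ((νs i).map (proj E))) E hE
end

section
/- Define Z_E = W_p(E♯*μ̂_n, E♯*μ) − 𝔼[W_p(E♯*μ̂_n, E♯*μ)] for E ∈ S_{d,k}, where μ̂_n = (1/n)Σδ_{X_i} with X_i i.i.d. from μ ∈ P_p(ℝ^d). Then for all U, V ∈ S_{d,k}, |Z_U − Z_V| ≤ L‖U − V‖_op almost surely, where L = 2(𝔼‖X‖^p)^{1/p} + (n^{-1}Σ‖X_i‖^p)^{1/p} + 𝔼[(n^{-1}Σ‖X_i‖^p)^{1/p}], and 𝔼[L] ≤ 4(𝔼‖X‖^p)^{1/p}. -/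
open MeasureTheory Filter Topology
open scoped ENNReal BoundedContinuousFunction

namespace Stmt14Aux

open scoped ProbabilityTheory

set_option linter.unusedSectionVars false

noncomputable def cost (p : ℝ) {α : Type*} [MeasurableSpace α] [PseudoMetricSpace α]
    (π : MeasureTheory.Measure (α × α)) : ℝ≥0∞ :=
  ∫⁻ z, edist z.1 z.2 ^ p ∂π

section General

variable {α : Type*} [MeasurableSpace α] [PseudoMetricSpace α] [BorelSpace α]
  [SecondCountableTopology α] {p : ℝ}

lemma edist_rpow_eq (x y : α) (hp0 : 0 ≤ p) :
    ENNReal.ofReal (dist x y ^ p) = edist x y ^ p := by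
  rw [edist_dist, ENNReal.ofReal_rpow_of_nonneg dist_nonneg hp0]

lemma Wp_eq (hp0 : 0 ≤ p) (μ ν : Measure α) :
    Wp p μ ν = ⨅ π ∈ {π : Measure (α × α) | π.map Prod.fst = μ ∧ π.map Prod.snd = ν},
      cost p π ^ (1 / p) := by
  unfold Wp cost
  congr 1
  ext π
  congr 1
  ext _
  congr 1
  exact lintegral_congr fun z => edist_rpow_eq z.1 z.2 hp0

lemma coupling_le (hp0 : 0 ≤ p) {μ ν : Measure α} {π : Measure (α × α)}
    (h1 : π.map Prod.fst = μ) (h2 : π.map Prod.snd = ν) :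
    Wp p μ ν ≤ cost p π ^ (1 / p) := by
  rw [Wp_eq hp0]
  exact biInf_le (fun π => cost p π ^ (1 / p)) ⟨h1, h2⟩

lemma measurable_cost_integrand :
    Measurable fun z : α × α => edist z.1 z.2 ^ p :=
  measurable_edist.pow measurable_const

lemma map_pair_le (hp0 : 0 ≤ p) {β : Type*} [MeasurableSpace β] (ρ : Measure β)
    {f g : β → α} (hf : Measurable f) (hg : Measurable g) :
    Wp p (ρ.map f) (ρ.map g) ≤ (∫⁻ x, edist (f x) (g x) ^ p ∂ρ) ^ (1 / p) := by
  have hfg : Measurable fun x => (f x, g x) := hf.prodMk hg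
  have h1 : (ρ.map fun x => (f x, g x)).map Prod.fst = ρ.map f := by
    rw [Measure.map_map measurable_fst hfg]; rfl
  have h2 : (ρ.map fun x => (f x, g x)).map Prod.snd = ρ.map g := by
    rw [Measure.map_map measurable_snd hfg]; rfl
  refine (coupling_le hp0 h1 h2).trans (le_of_eq ?_)
  congr 1
  unfold cost
  rw [lintegral_map measurable_cost_integrand hfg]

end General

end Stmt14Aux
namespace Stmt14Aux

open ProbabilityTheory

section Glue

variable {β γ δ : Type*} [MeasurableSpace β] [MeasurableSpace γ] [MeasurableSpace δ]

lemma compProd_prod_map_left (ν : Measure β) [SFinite ν] (κ : Kernel β γ) (η : Kernel β δ)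
    [IsMarkovKernel κ] [IsMarkovKernel η] :
    (ν ⊗ₘ (κ ×ₖ η)).map (fun z => (z.1, z.2.1)) = ν ⊗ₘ κ := by
  have hm : Measurable fun z : β × γ × δ => (z.1, z.2.1) := by fun_prop
  ext s hs
  rw [Measure.map_apply hm hs, Measure.compProd_apply (hs.preimage hm),
    Measure.compProd_apply hs]
  refine lintegral_congr fun b => ?_
  have h2 : (Prod.mk b ⁻¹' ((fun z : β × γ × δ => (z.1, z.2.1)) ⁻¹' s))
      = {w : γ × δ | w.1 ∈ Prod.mk b ⁻¹' s} := rfl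
  rw [h2, ← Kernel.fst_apply' _ _ (measurable_prodMk_left hs), Kernel.fst_prod]

lemma compProd_prod_map_right (ν : Measure β) [SFinite ν] (κ : Kernel β γ) (η : Kernel β δ)
    [IsMarkovKernel κ] [IsMarkovKernel η] :
    (ν ⊗ₘ (κ ×ₖ η)).map (fun z => (z.1, z.2.2)) = ν ⊗ₘ η := by
  have hm : Measurable fun z : β × γ × δ => (z.1, z.2.2) := by fun_prop
  ext s hs
  rw [Measure.map_apply hm hs, Measure.compProd_apply (hs.preimage hm),
    Measure.compProd_apply hs]
  refine lintegral_congr fun b => ?_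
  have h2 : (Prod.mk b ⁻¹' ((fun z : β × γ × δ => (z.1, z.2.2)) ⁻¹' s))
      = Prod.snd ⁻¹' (Prod.mk b ⁻¹' s) := rfl
  rw [h2, ← Kernel.snd_apply' _ _ (measurable_prodMk_left hs), Kernel.snd_prod]

end Glue

section Triangle

variable {α : Type*} [MeasurableSpace α] [PseudoMetricSpace α] [BorelSpace α]
  [SecondCountableTopology α] [StandardBorelSpace α] [Nonempty α] {p : ℝ}

lemma prob_of_fst {π : Measure (α × α)} {μ : Measure α} [IsProbabilityMeasure μ]
    (h : π.map Prod.fst = μ) : IsProbabilityMeasure π := by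
  constructor
  have : π.map Prod.fst Set.univ = 1 := by rw [h]; exact measure_univ
  rwa [Measure.map_apply measurable_fst MeasurableSet.univ, Set.preimage_univ] at this

lemma glue_le (hp : 1 ≤ p) {μ ν κm : Measure α} [IsProbabilityMeasure μ]
    [IsProbabilityMeasure ν] [IsProbabilityMeasure κm]
    {π₁ π₂ : Measure (α × α)} (h₁₁ : π₁.map Prod.fst = μ) (h₁₂ : π₁.map Prod.snd = ν)
    (h₂₁ : π₂.map Prod.fst = ν) (h₂₂ : π₂.map Prod.snd = κm) :
    Wp p μ κm ≤ cost p π₁ ^ (1 / p) + cost p π₂ ^ (1 / p) := by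
  have hp0 : 0 ≤ p := le_trans zero_le_one hp
  have hinv0 : (0:ℝ) ≤ 1 / p := by positivity
  haveI : IsProbabilityMeasure π₁ := prob_of_fst h₁₁
  haveI : IsProbabilityMeasure π₂ := prob_of_fst h₂₁
  have m1 : Measurable fun z : α × α × α => (z.1, z.2.1) := by fun_prop
  have m2 : Measurable fun z : α × α × α => (z.1, z.2.2) := by fun_prop
  have m3 : Measurable fun z : α × α × α => (z.2.1, z.2.2) := by fun_prop
  set ρ₁ : Measure (α × α) := π₁.map Prod.swap with hρ₁
  haveI : IsProbabilityMeasure ρ₁ := Measure.isProbabilityMeasure_map measurable_swap.aemeasurable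
  have hρfst : ρ₁.fst = ν := by
    show (π₁.map Prod.swap).map Prod.fst = ν
    rw [Measure.map_map measurable_fst measurable_swap]
    exact h₁₂
  have hπ₂fst : π₂.fst = ν := h₂₁
  set κ₁ := ρ₁.condKernel with hκ₁
  set κ₂ := π₂.condKernel with hκ₂
  have hd₁ : ν ⊗ₘ κ₁ = ρ₁ := by rw [← hρfst]; exact ρ₁.disintegrate _
  have hd₂ : ν ⊗ₘ κ₂ = π₂ := by rw [← hπ₂fst]; exact π₂.disintegrate _
  set τ : Measure (α × α × α) := ν ⊗ₘ (κ₁ ×ₖ κ₂) with hτ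
  have hmap₁ : τ.map (fun z => (z.1, z.2.1)) = ρ₁ := by
    rw [hτ, compProd_prod_map_left, hd₁]
  have hmap₂ : τ.map (fun z => (z.1, z.2.2)) = π₂ := by
    rw [hτ, compProd_prod_map_right, hd₂]
  set π : Measure (α × α) := τ.map (fun z => (z.2.1, z.2.2)) with hπ
  -- marginals of π
  have hπfst : π.map Prod.fst = μ := by
    calc π.map Prod.fst = τ.map (Prod.fst ∘ fun z : α × α × α => (z.2.1, z.2.2)) :=
          Measure.map_map measurable_fst m3
      _ = (τ.map (fun z : α × α × α => (z.1, z.2.1))).map Prod.snd :=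
          (Measure.map_map measurable_snd m1).symm
      _ = ρ₁.map Prod.snd := by rw [hmap₁]
      _ = π₁.map (Prod.snd ∘ Prod.swap) := Measure.map_map measurable_snd measurable_swap
      _ = μ := h₁₁
  have hπsnd : π.map Prod.snd = κm := by
    calc π.map Prod.snd = τ.map (Prod.snd ∘ fun z : α × α × α => (z.2.1, z.2.2)) :=
          Measure.map_map measurable_snd m3
      _ = (τ.map (fun z : α × α × α => (z.1, z.2.2))).map Prod.snd :=
          (Measure.map_map measurable_snd m2).symm
      _ = π₂.map Prod.snd := by rw [hmap₂]
      _ = κm := h₂₂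
  refine (coupling_le hp0 hπfst hπsnd).trans ?_
  -- cost bound
  set f : α × α × α → ℝ≥0∞ := fun z => edist z.2.1 z.1 with hf
  set g : α × α × α → ℝ≥0∞ := fun z => edist z.1 z.2.2 with hg
  have hfm : Measurable f := measurable_edist.comp
    ((measurable_fst.comp measurable_snd).prodMk measurable_fst)
  have hgm : Measurable g := measurable_edist.comp
    (measurable_fst.prodMk (measurable_snd.comp measurable_snd))
  have hcostπ : cost p π = ∫⁻ z, edist z.2.1 z.2.2 ^ p ∂τ := by
    unfold cost
    rw [hπ, lintegral_map measurable_cost_integrand m3]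
  have htri : cost p π ≤ ∫⁻ z, (f z + g z) ^ p ∂τ := by
    rw [hcostπ]
    refine lintegral_mono fun z => ?_
    refine ENNReal.rpow_le_rpow ?_ hp0
    calc edist z.2.1 z.2.2 ≤ edist z.2.1 z.1 + edist z.1 z.2.2 := edist_triangle _ _ _
      _ = f z + g z := rfl
  have hmink : (∫⁻ z, (f z + g z) ^ p ∂τ) ^ (1 / p)
      ≤ (∫⁻ z, f z ^ p ∂τ) ^ (1 / p) + (∫⁻ z, g z ^ p ∂τ) ^ (1 / p) :=
    ENNReal.lintegral_Lp_add_le hfm.aemeasurable hgm.aemeasurable hp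
  have hF1 : Measurable fun w : α × α => edist w.2 w.1 ^ p :=
    (measurable_edist.comp (measurable_snd.prodMk measurable_fst)).pow measurable_const
  have hc₁ : (∫⁻ z, f z ^ p ∂τ) = cost p π₁ := by
    have h1 : (∫⁻ w, edist w.2 w.1 ^ p ∂(τ.map (fun z : α × α × α => (z.1, z.2.1))))
        = ∫⁻ z, f z ^ p ∂τ := lintegral_map hF1 m1
    have h2 : (∫⁻ w, edist w.2 w.1 ^ p ∂(π₁.map Prod.swap)) = cost p π₁ :=
      lintegral_map hF1 measurable_swap
    rw [← h1, hmap₁]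
    exact h2
  have hc₂ : (∫⁻ z, g z ^ p ∂τ) = cost p π₂ := by
    have h1 : (∫⁻ w, edist w.1 w.2 ^ p ∂(τ.map (fun z : α × α × α => (z.1, z.2.2))))
        = ∫⁻ z, g z ^ p ∂τ := lintegral_map measurable_cost_integrand m2
    rw [← h1, hmap₂]
    rfl
  calc cost p π ^ (1 / p) ≤ (∫⁻ z, (f z + g z) ^ p ∂τ) ^ (1 / p) :=
        ENNReal.rpow_le_rpow htri hinv0
    _ ≤ (∫⁻ z, f z ^ p ∂τ) ^ (1 / p) + (∫⁻ z, g z ^ p ∂τ) ^ (1 / p) := hmink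
    _ = cost p π₁ ^ (1 / p) + cost p π₂ ^ (1 / p) := by rw [hc₁, hc₂]

lemma Wp_triangle (hp : 1 ≤ p) (μ ν κm : Measure α) [IsProbabilityMeasure μ]
    [IsProbabilityMeasure ν] [IsProbabilityMeasure κm] :
    Wp p μ κm ≤ Wp p μ ν + Wp p ν κm := by
  have hp0 : 0 ≤ p := le_trans zero_le_one hp
  rw [Wp_eq hp0 μ ν, Wp_eq hp0 ν κm, iInf_subtype', iInf_subtype', ENNReal.iInf_add]
  refine le_iInf fun π₁ => ?_
  rw [ENNReal.add_iInf]
  refine le_iInf fun π₂ => ?_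
  exact glue_le hp π₁.2.1 π₁.2.2 π₂.2.1 π₂.2.2

end Triangle

end Stmt14Aux
namespace Stmt14Aux

section Euclid

variable {d k : ℕ} {p : ℝ}

lemma proj_eq (E : Matrix (Fin d) (Fin k) ℝ) (x : EuclideanSpace ℝ (Fin d)) :
    proj E x = projL E x := rfl

lemma measurable_proj (E : Matrix (Fin d) (Fin k) ℝ) : Measurable (proj E) := by
  have h : proj E = fun x => projL E x := rfl
  rw [h]
  exact (projL E).continuous.measurable

lemma projL_sub (U V : Matrix (Fin d) (Fin k) ℝ) : projL (U - V) = projL U - projL V := by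
  unfold projL
  rw [Matrix.transpose_sub, map_sub, map_sub]

lemma projL_zero : projL (0 : Matrix (Fin d) (Fin k) ℝ) = 0 := by
  unfold projL
  rw [Matrix.transpose_zero, map_zero, map_zero]

lemma norm_projL_sub_symm (U V : Matrix (Fin d) (Fin k) ℝ) :
    ‖projL (V - U)‖ = ‖projL (U - V)‖ := by
  have h : projL (V - U) = -projL (U - V) := by
    have h2 : V - U = (0 : Matrix (Fin d) (Fin k) ℝ) - (U - V) := by abel
    rw [h2, projL_sub, projL_zero, zero_sub]
  rw [h, norm_neg]

noncomputable def Mom (p : ℝ) {d : ℕ} (ρ : Measure (EuclideanSpace ℝ (Fin d))) : ℝ≥0∞ :=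
  (∫⁻ x, ENNReal.ofReal ‖x‖ ^ p ∂ρ) ^ (1 / p)

lemma measurable_ofReal_norm_rpow :
    Measurable fun x : EuclideanSpace ℝ (Fin d) => ENNReal.ofReal ‖x‖ ^ p :=
  (measurable_norm.ennreal_ofReal).pow measurable_const

lemma cross_le (hp : 1 ≤ p) (ρ : Measure (EuclideanSpace ℝ (Fin d)))
    [IsProbabilityMeasure ρ] (U V : Matrix (Fin d) (Fin k) ℝ) :
    Wp p (ρ.map (proj U)) (ρ.map (proj V)) ≤ ENNReal.ofReal ‖projL (U - V)‖ * Mom p ρ := by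
  have hp0 : 0 ≤ p := le_trans zero_le_one hp
  have hpne : p ≠ 0 := by positivity
  have hinv0 : (0:ℝ) ≤ 1 / p := by positivity
  set C := ENNReal.ofReal ‖projL (U - V)‖ with hC
  refine (map_pair_le hp0 ρ (measurable_proj U) (measurable_proj V)).trans ?_
  have hpt : ∀ x, edist (proj U x) (proj V x) ^ p ≤ C ^ p * ENNReal.ofReal ‖x‖ ^ p := by
    intro x
    have h1 : edist (proj U x) (proj V x) = ENNReal.ofReal ‖projL (U - V) x‖ := by
      rw [edist_dist, dist_eq_norm]
      congr 1
      rw [proj_eq, proj_eq, projL_sub]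
      rfl
    have h2 : ‖projL (U - V) x‖ ≤ ‖projL (U - V)‖ * ‖x‖ := (projL (U - V)).le_opNorm x
    calc edist (proj U x) (proj V x) ^ p
        = ENNReal.ofReal ‖projL (U - V) x‖ ^ p := by rw [h1]
      _ ≤ ENNReal.ofReal (‖projL (U - V)‖ * ‖x‖) ^ p :=
          ENNReal.rpow_le_rpow (ENNReal.ofReal_le_ofReal h2) hp0
      _ = (C * ENNReal.ofReal ‖x‖) ^ p := by rw [ENNReal.ofReal_mul (norm_nonneg _)]
      _ = C ^ p * ENNReal.ofReal ‖x‖ ^ p := ENNReal.mul_rpow_of_nonneg _ _ hp0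
  calc (∫⁻ x, edist (proj U x) (proj V x) ^ p ∂ρ) ^ (1 / p)
      ≤ (∫⁻ x, C ^ p * ENNReal.ofReal ‖x‖ ^ p ∂ρ) ^ (1 / p) :=
        ENNReal.rpow_le_rpow (lintegral_mono hpt) hinv0
    _ = (C ^ p * ∫⁻ x, ENNReal.ofReal ‖x‖ ^ p ∂ρ) ^ (1 / p) := by
        rw [lintegral_const_mul _ measurable_ofReal_norm_rpow]
    _ = C * Mom p ρ := by
        rw [ENNReal.mul_rpow_of_nonneg _ _ hinv0, ← ENNReal.rpow_mul,
          mul_one_div_cancel hpne, ENNReal.rpow_one, Mom]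

lemma key_le (hp : 1 ≤ p) (ρ₁ ρ₂ : Measure (EuclideanSpace ℝ (Fin d)))
    [IsProbabilityMeasure ρ₁] [IsProbabilityMeasure ρ₂] (U V : Matrix (Fin d) (Fin k) ℝ) :
    Wp p (ρ₁.map (proj U)) (ρ₂.map (proj U))
      ≤ Wp p (ρ₁.map (proj V)) (ρ₂.map (proj V))
        + ENNReal.ofReal ‖projL (U - V)‖ * (Mom p ρ₁ + Mom p ρ₂) := by
  haveI h1 : IsProbabilityMeasure (ρ₁.map (proj U)) :=
    Measure.isProbabilityMeasure_map (measurable_proj U).aemeasurable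
  haveI h2 : IsProbabilityMeasure (ρ₂.map (proj U)) :=
    Measure.isProbabilityMeasure_map (measurable_proj U).aemeasurable
  haveI h3 : IsProbabilityMeasure (ρ₁.map (proj V)) :=
    Measure.isProbabilityMeasure_map (measurable_proj V).aemeasurable
  haveI h4 : IsProbabilityMeasure (ρ₂.map (proj V)) :=
    Measure.isProbabilityMeasure_map (measurable_proj V).aemeasurable
  set C := ENNReal.ofReal ‖projL (U - V)‖ with hC
  calc Wp p (ρ₁.map (proj U)) (ρ₂.map (proj U))
      ≤ Wp p (ρ₁.map (proj U)) (ρ₁.map (proj V))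
        + Wp p (ρ₁.map (proj V)) (ρ₂.map (proj U)) := Wp_triangle hp _ _ _
    _ ≤ Wp p (ρ₁.map (proj U)) (ρ₁.map (proj V))
        + (Wp p (ρ₁.map (proj V)) (ρ₂.map (proj V))
          + Wp p (ρ₂.map (proj V)) (ρ₂.map (proj U))) :=
        add_le_add_right (Wp_triangle hp _ _ _) _
    _ ≤ C * Mom p ρ₁ + (Wp p (ρ₁.map (proj V)) (ρ₂.map (proj V)) + C * Mom p ρ₂) := by
        refine add_le_add (cross_le hp ρ₁ U V) (add_le_add_right ?_ _)
        have := cross_le hp ρ₂ V U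
        rwa [norm_projL_sub_symm] at this
    _ = Wp p (ρ₁.map (proj V)) (ρ₂.map (proj V)) + C * (Mom p ρ₁ + Mom p ρ₂) := by ring

lemma proj_zero (x : EuclideanSpace ℝ (Fin d)) :
    proj (0 : Matrix (Fin d) (Fin k) ℝ) x = 0 := by
  simp [proj]

lemma map_proj_zero (ρ : Measure (EuclideanSpace ℝ (Fin d))) [IsProbabilityMeasure ρ] :
    ρ.map (proj (0 : Matrix (Fin d) (Fin k) ℝ)) = Measure.dirac (0 : EuclideanSpace ℝ (Fin k)) := by
  have h : proj (0 : Matrix (Fin d) (Fin k) ℝ) = fun _ => (0 : EuclideanSpace ℝ (Fin k)) :=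
    funext proj_zero
  rw [h, Measure.map_const, measure_univ, one_smul]

lemma Wp_dirac_le (hp : 1 ≤ p) :
    Wp p (Measure.dirac (0 : EuclideanSpace ℝ (Fin k))) (Measure.dirac 0) ≤ 0 := by
  have hp0 : 0 ≤ p := le_trans zero_le_one hp
  have h := map_pair_le hp0 (Measure.dirac (0 : EuclideanSpace ℝ (Fin k)))
    measurable_id measurable_id
  rw [Measure.map_id] at h
  refine h.trans (le_of_eq ?_)
  have : ∀ x : EuclideanSpace ℝ (Fin k), edist (id x) (id x) ^ p = 0 := fun x => by
    rw [id, edist_self, ENNReal.zero_rpow_of_pos (lt_of_lt_of_le zero_lt_one hp)]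
  rw [lintegral_congr this, lintegral_zero,
    ENNReal.zero_rpow_of_pos (by positivity : (0:ℝ) < 1 / p)]

lemma W_bound (hp : 1 ≤ p) (ρ₁ ρ₂ : Measure (EuclideanSpace ℝ (Fin d)))
    [IsProbabilityMeasure ρ₁] [IsProbabilityMeasure ρ₂] (U : Matrix (Fin d) (Fin k) ℝ) :
    Wp p (ρ₁.map (proj U)) (ρ₂.map (proj U))
      ≤ ENNReal.ofReal ‖projL U‖ * (Mom p ρ₁ + Mom p ρ₂) := by
  have h := key_le hp ρ₁ ρ₂ U 0
  rw [map_proj_zero, map_proj_zero, sub_zero] at h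
  refine h.trans ?_
  calc Wp p (Measure.dirac (0 : EuclideanSpace ℝ (Fin k))) (Measure.dirac 0)
        + ENNReal.ofReal ‖projL U‖ * (Mom p ρ₁ + Mom p ρ₂)
      ≤ 0 + ENNReal.ofReal ‖projL U‖ * (Mom p ρ₁ + Mom p ρ₂) :=
        add_le_add_left (Wp_dirac_le hp) _
    _ = ENNReal.ofReal ‖projL U‖ * (Mom p ρ₁ + Mom p ρ₂) := by rw [zero_add]

end Euclid

end Stmt14Aux
namespace Stmt14Aux

section Emp

variable {n : ℕ} {α : Type*} [MeasurableSpace α] {p : ℝ}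

noncomputable def uniformFin (n : ℕ) : Measure (Fin n) :=
  (n : ℝ≥0∞)⁻¹ • ∑ i, Measure.dirac i

lemma empMeasure_eq_map [MeasurableSingletonClass α] (X : Fin n → α) :
    empMeasure X = (uniformFin n).map X := by
  have hX : Measurable X := measurable_of_finite X
  ext s hs
  rw [Measure.map_apply hX hs]
  simp only [empMeasure, uniformFin, Measure.smul_apply, Measure.finset_sum_apply,
    Measure.dirac_apply' _ hs, Measure.dirac_apply' _ (hs.preimage hX), smul_eq_mul]
  congr 1

lemma lintegral_empMeasure [MeasurableSingletonClass α] (X : Fin n → α) (f : α → ℝ≥0∞) :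
    ∫⁻ x, f x ∂(empMeasure X) = (n : ℝ≥0∞)⁻¹ * ∑ i, f (X i) := by
  rw [empMeasure, lintegral_smul_measure, lintegral_finset_sum_measure]
  simp [lintegral_dirac]

lemma isProbability_empMeasure (hn : 0 < n) (X : Fin n → α) :
    IsProbabilityMeasure (empMeasure X) := by
  constructor
  simp only [empMeasure, Measure.smul_apply, Measure.finset_sum_apply, measure_univ,
    smul_eq_mul, Finset.sum_const, Finset.card_univ, Fintype.card_fin, nsmul_eq_mul, mul_one]
  exact ENNReal.inv_mul_cancel (Nat.cast_ne_zero.mpr hn.ne') (ENNReal.natCast_ne_top n)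

lemma isProbability_uniformFin (hn : 0 < n) : IsProbabilityMeasure (uniformFin n) := by
  have h := isProbability_empMeasure hn (id : Fin n → Fin n)
  have h2 : empMeasure (id : Fin n → Fin n) = uniformFin n := by
    rw [empMeasure_eq_map, Measure.map_id]
  rwa [h2] at h

end Emp

section Moments

variable {d : ℕ} {p : ℝ} {n : ℕ}

lemma Mom_emp (hn : 0 < n) (hp : 1 ≤ p) (x : Fin n → EuclideanSpace ℝ (Fin d)) :
    Mom p (empMeasure x) = ENNReal.ofReal (((n : ℝ)⁻¹ * ∑ i, ‖x i‖ ^ p) ^ (1 / p)) := by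
  have hp0 : 0 ≤ p := le_trans zero_le_one hp
  have hinv0 : (0:ℝ) ≤ 1 / p := by positivity
  have hn0 : (0:ℝ) < n := by exact_mod_cast hn
  rw [Mom, lintegral_empMeasure]
  have h1 : ∀ i : Fin n, ENNReal.ofReal ‖x i‖ ^ p = ENNReal.ofReal (‖x i‖ ^ p) := fun i =>
    ENNReal.ofReal_rpow_of_nonneg (norm_nonneg _) hp0
  rw [Finset.sum_congr rfl fun i _ => h1 i,
    ← ENNReal.ofReal_sum_of_nonneg (fun i _ => Real.rpow_nonneg (norm_nonneg _) p)]
  have h2 : ((n : ℝ≥0∞))⁻¹ = ENNReal.ofReal ((n:ℝ)⁻¹) := by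
    rw [ENNReal.ofReal_inv_of_pos hn0, ENNReal.ofReal_natCast]
  rw [h2, ← ENNReal.ofReal_mul (by positivity),
    ENNReal.ofReal_rpow_of_nonneg (by positivity) hinv0]

lemma Mom_eq_ofReal (hp : 1 ≤ p) (μ : Measure (EuclideanSpace ℝ (Fin d)))
    (hmom : Integrable (fun x => ‖x‖ ^ p) μ) :
    Mom p μ = ENNReal.ofReal ((∫ x, ‖x‖ ^ p ∂μ) ^ (1 / p)) := by
  have hp0 : 0 ≤ p := le_trans zero_le_one hp
  have hinv0 : (0:ℝ) ≤ 1 / p := by positivity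
  have h1 : (∫⁻ x, ENNReal.ofReal ‖x‖ ^ p ∂μ) = ENNReal.ofReal (∫ x, ‖x‖ ^ p ∂μ) := by
    rw [ofReal_integral_eq_lintegral_ofReal hmom
      (Filter.Eventually.of_forall fun x => Real.rpow_nonneg (norm_nonneg _) p)]
    exact lintegral_congr fun x => ENNReal.ofReal_rpow_of_nonneg (norm_nonneg _) hp0
  rw [Mom, h1, ENNReal.ofReal_rpow_of_nonneg
    (integral_nonneg fun x => Real.rpow_nonneg (norm_nonneg _) p) hinv0]

lemma abs_toReal_sub_le {A B : ℝ≥0∞} (hA : A ≠ ⊤) (hB : B ≠ ⊤) {c : ℝ} (hc : 0 ≤ c)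
    (h1 : A ≤ B + ENNReal.ofReal c) (h2 : B ≤ A + ENNReal.ofReal c) :
    |A.toReal - B.toReal| ≤ c := by
  rw [abs_sub_le_iff]
  constructor
  · have := ENNReal.toReal_mono (ENNReal.add_ne_top.2 ⟨hB, ENNReal.ofReal_ne_top⟩) h1
    rw [ENNReal.toReal_add hB ENNReal.ofReal_ne_top, ENNReal.toReal_ofReal hc] at this
    linarith
  · have := ENNReal.toReal_mono (ENNReal.add_ne_top.2 ⟨hA, ENNReal.ofReal_ne_top⟩) h2
    rw [ENNReal.toReal_add hA ENNReal.ofReal_ne_top, ENNReal.toReal_ofReal hc] at this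
    linarith

end Moments

end Stmt14Aux
namespace Stmt14Aux

section Lip

variable {d k n : ℕ} {p : ℝ}

lemma W_ne_top (hn : 0 < n) (hp : 1 ≤ p) (μ : Measure (EuclideanSpace ℝ (Fin d)))
    [IsProbabilityMeasure μ] (hmom : Integrable (fun x => ‖x‖ ^ p) μ)
    (E : Matrix (Fin d) (Fin k) ℝ) (x : Fin n → EuclideanSpace ℝ (Fin d)) :
    Wp p ((empMeasure x).map (proj E)) (μ.map (proj E)) ≠ ⊤ := by
  haveI := isProbability_empMeasure hn x
  have h := W_bound hp (empMeasure x) μ E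
  refine ne_top_of_le_ne_top ?_ h
  rw [Mom_emp hn hp, Mom_eq_ofReal hp μ hmom]
  exact ENNReal.mul_ne_top ENNReal.ofReal_ne_top
    (ENNReal.add_ne_top.2 ⟨ENNReal.ofReal_ne_top, ENNReal.ofReal_ne_top⟩)

lemma cross_emp (hn : 0 < n) (hp : 1 ≤ p) (E : Matrix (Fin d) (Fin k) ℝ)
    (x y : Fin n → EuclideanSpace ℝ (Fin d)) :
    Wp p ((empMeasure x).map (proj E)) ((empMeasure y).map (proj E))
      ≤ ENNReal.ofReal (‖projL E‖ * dist x y) := by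
  have hp0 : 0 ≤ p := le_trans zero_le_one hp
  have hpne : p ≠ 0 := by positivity
  have hinv0 : (0:ℝ) ≤ 1 / p := by positivity
  haveI := isProbability_uniformFin hn
  rw [empMeasure_eq_map x, empMeasure_eq_map y,
    Measure.map_map (measurable_proj E) (measurable_of_finite x),
    Measure.map_map (measurable_proj E) (measurable_of_finite y)]
  refine (map_pair_le hp0 (uniformFin n)
    ((measurable_proj E).comp (measurable_of_finite x))
    ((measurable_proj E).comp (measurable_of_finite y))).trans ?_
  set D := ENNReal.ofReal (‖projL E‖ * dist x y) with hD
  have hpt : ∀ i, edist ((proj E ∘ x) i) ((proj E ∘ y) i) ^ p ≤ D ^ p := by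
    intro i
    refine ENNReal.rpow_le_rpow ?_ hp0
    have h1 : edist ((proj E ∘ x) i) ((proj E ∘ y) i)
        = ENNReal.ofReal ‖projL E (x i) - projL E (y i)‖ := by
      rw [edist_dist, dist_eq_norm]
      rfl
    rw [h1, ← map_sub, hD]
    refine ENNReal.ofReal_le_ofReal ?_
    calc ‖projL E (x i - y i)‖ ≤ ‖projL E‖ * ‖x i - y i‖ := (projL E).le_opNorm _
      _ ≤ ‖projL E‖ * dist x y := by
          rw [← dist_eq_norm]
          exact mul_le_mul_of_nonneg_left (dist_le_pi_dist x y i) (norm_nonneg _)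
  calc (∫⁻ i, edist ((proj E ∘ x) i) ((proj E ∘ y) i) ^ p ∂uniformFin n) ^ (1 / p)
      ≤ (∫⁻ _, D ^ p ∂uniformFin n) ^ (1 / p) :=
        ENNReal.rpow_le_rpow (lintegral_mono hpt) hinv0
    _ = (D ^ p) ^ (1 / p) := by rw [lintegral_const, measure_univ, mul_one]
    _ = D := by rw [← ENNReal.rpow_mul, mul_one_div_cancel hpne, ENNReal.rpow_one]

lemma continuous_W (hn : 0 < n) (hp : 1 ≤ p) (μ : Measure (EuclideanSpace ℝ (Fin d)))
    [IsProbabilityMeasure μ] (hmom : Integrable (fun x => ‖x‖ ^ p) μ)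
    (E : Matrix (Fin d) (Fin k) ℝ) :
    Continuous fun x : Fin n → EuclideanSpace ℝ (Fin d) =>
      (Wp p ((empMeasure x).map (proj E)) (μ.map (proj E))).toReal := by
  have hlip : ∀ x y : Fin n → EuclideanSpace ℝ (Fin d),
      |(Wp p ((empMeasure x).map (proj E)) (μ.map (proj E))).toReal
        - (Wp p ((empMeasure y).map (proj E)) (μ.map (proj E))).toReal|
      ≤ ‖projL E‖ * dist x y := by
    intro x y
    haveI := isProbability_empMeasure hn x
    haveI := isProbability_empMeasure hn y
    haveI : IsProbabilityMeasure ((empMeasure x).map (proj E)) :=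
      Measure.isProbabilityMeasure_map (measurable_proj E).aemeasurable
    haveI : IsProbabilityMeasure ((empMeasure y).map (proj E)) :=
      Measure.isProbabilityMeasure_map (measurable_proj E).aemeasurable
    haveI : IsProbabilityMeasure (μ.map (proj E)) :=
      Measure.isProbabilityMeasure_map (measurable_proj E).aemeasurable
    refine abs_toReal_sub_le (W_ne_top hn hp μ hmom E x) (W_ne_top hn hp μ hmom E y)
      (mul_nonneg (norm_nonneg _) dist_nonneg) ?_ ?_
    · refine (Wp_triangle hp _ ((empMeasure y).map (proj E)) _).trans ?_
      rw [add_comm]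
      exact add_le_add_right (cross_emp hn hp E x y) _
    · refine (Wp_triangle hp _ ((empMeasure x).map (proj E)) _).trans ?_
      rw [add_comm]
      refine add_le_add_right ((cross_emp hn hp E y x).trans (le_of_eq ?_)) _
      rw [dist_comm]
  refine LipschitzWith.continuous (K := ‖projL E‖₊) (LipschitzWith.of_dist_le_mul fun x y => ?_)
  rw [Real.dist_eq, coe_nnnorm]
  exact hlip x y

end Lip

end Stmt14Aux

open Stmt14Aux

theorem stmt14 {d k n : ℕ} (hn : 0 < n) (p : ℝ) (hp : 1 ≤ p)
    {Ω : Type*} [MeasurableSpace Ω] (P : Measure Ω) [IsProbabilityMeasure P]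
    (μ : Measure (EuclideanSpace ℝ (Fin d))) [IsProbabilityMeasure μ]
    (X : Fin n → Ω → EuclideanSpace ℝ (Fin d))
    (hmeas : ∀ i, Measurable (X i))
    (hlaw : ∀ i, P.map (X i) = μ)
    (hindep : ProbabilityTheory.iIndepFun X P)
    (hmom : Integrable (fun x => ‖x‖ ^ p) μ) :
    (∀ U V : Matrix (Fin d) (Fin k) ℝ, U ∈ Stiefel d k → V ∈ Stiefel d k →
      ∀ᵐ ω ∂P,
        |((Wp p ((empMeasure fun i => X i ω).map (proj U)) (μ.map (proj U))).toReal
            - ∫ ω', (Wp p ((empMeasure fun i => X i ω').map (proj U)) (μ.map (proj U))).toReal ∂P)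
          - ((Wp p ((empMeasure fun i => X i ω).map (proj V)) (μ.map (proj V))).toReal
            - ∫ ω', (Wp p ((empMeasure fun i => X i ω').map (proj V)) (μ.map (proj V))).toReal ∂P)|
        ≤ (2 * (∫ x, ‖x‖ ^ p ∂μ) ^ (1 / p)
            + ((n : ℝ)⁻¹ * ∑ i, ‖X i ω‖ ^ p) ^ (1 / p)
            + ∫ ω', ((n : ℝ)⁻¹ * ∑ i, ‖X i ω'‖ ^ p) ^ (1 / p) ∂P)
          * ‖projL (U - V)‖) ∧
    ∫ ω, (2 * (∫ x, ‖x‖ ^ p ∂μ) ^ (1 / p)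
            + ((n : ℝ)⁻¹ * ∑ i, ‖X i ω‖ ^ p) ^ (1 / p)
            + ∫ ω', ((n : ℝ)⁻¹ * ∑ i, ‖X i ω'‖ ^ p) ^ (1 / p) ∂P) ∂P
        ≤ 4 * (∫ x, ‖x‖ ^ p ∂μ) ^ (1 / p) := by
  have hp0 : 0 ≤ p := le_trans zero_le_one hp
  have hppos : 0 < p := lt_of_lt_of_le zero_lt_one hp
  have hpne : p ≠ 0 := ne_of_gt hppos
  have hinv0 : (0:ℝ) ≤ 1 / p := by positivity
  have hn0 : (n : ℝ) ≠ 0 := Nat.cast_ne_zero.mpr hn.ne'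
  set m : ℝ := ∫ x, ‖x‖ ^ p ∂μ with hm
  have hm0 : 0 ≤ m := integral_nonneg fun x => Real.rpow_nonneg (norm_nonneg _) p
  have hm'0 : 0 ≤ m ^ (1 / p) := Real.rpow_nonneg hm0 _
  set mhat : Ω → ℝ := fun ω => (n : ℝ)⁻¹ * ∑ i, ‖X i ω‖ ^ p with hmhat
  set g : Ω → ℝ := fun ω => mhat ω ^ (1 / p) with hg
  have hmhat0 : ∀ ω, 0 ≤ mhat ω := fun ω => mul_nonneg (by positivity)
    (Finset.sum_nonneg fun i _ => Real.rpow_nonneg (norm_nonneg _) p)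
  have hg0 : ∀ ω, 0 ≤ g ω := fun ω => Real.rpow_nonneg (hmhat0 ω) _
  have hmhatmeas : Measurable mhat :=
    (Finset.measurable_sum Finset.univ fun i _ =>
      (hmeas i).norm.pow measurable_const).const_mul _
  have hgmeas : Measurable g := hmhatmeas.pow measurable_const
  have hXint : ∀ i, Integrable (fun ω => ‖X i ω‖ ^ p) P := by
    intro i
    have h := hmom
    rw [← hlaw i] at h
    exact (integrable_map_measure
      (measurable_norm.pow measurable_const).aestronglyMeasurable
      (hmeas i).aemeasurable).mp h
  have hmhatint : Integrable mhat P :=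
    ((integrable_finset_sum Finset.univ fun i _ => hXint i).const_mul _)
  have hintmhat : ∫ ω, mhat ω ∂P = m := by
    have h1 : ∀ i : Fin n, ∫ ω, ‖X i ω‖ ^ p ∂P = m := by
      intro i
      rw [hm, ← hlaw i, integral_map (hmeas i).aemeasurable
        (measurable_norm.pow measurable_const).aestronglyMeasurable]
    rw [hmhat]
    rw [MeasureTheory.integral_const_mul, integral_finset_sum Finset.univ fun i _ => hXint i]
    simp only [h1, Finset.sum_const, Finset.card_univ, Fintype.card_fin, nsmul_eq_mul]
    field_simp
  have hgint : Integrable g P := by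
    refine Integrable.mono' ((integrable_const (1:ℝ)).add hmhatint)
      hgmeas.aestronglyMeasurable (Filter.Eventually.of_forall fun ω => ?_)
    rw [Real.norm_eq_abs, abs_of_nonneg (hg0 ω)]
    show g ω ≤ 1 + mhat ω
    rcases le_total (mhat ω) 1 with h | h
    · have h2 : g ω ≤ 1 := Real.rpow_le_one (hmhat0 ω) h hinv0
      linarith [hmhat0 ω]
    · have h2 : g ω ≤ mhat ω ^ (1:ℝ) :=
        Real.rpow_le_rpow_of_exponent_le h (by rw [div_le_one hppos]; exact hp)
      rw [Real.rpow_one] at h2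
      linarith
  -- Jensen-type bound ∫ g ≤ m ^ (1/p)
  have hgle : ∫ ω, g ω ∂P ≤ m ^ (1 / p) := by
    have e1 : ∫ ω, g ω ∂P = (∫⁻ ω, ENNReal.ofReal (g ω) ∂P).toReal :=
      integral_eq_lintegral_of_nonneg_ae (Filter.Eventually.of_forall hg0)
        hgmeas.aestronglyMeasurable
    have e2 : ∫⁻ ω, ENNReal.ofReal (g ω) ∂P = eLpNorm g 1 P := by
      rw [eLpNorm_one_eq_lintegral_enorm]
      exact lintegral_congr fun ω => (Real.enorm_eq_ofReal (hg0 ω)).symm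
    have e5 : ∀ ω, ‖g ω‖ₑ ^ p = ENNReal.ofReal (mhat ω) := by
      intro ω
      rw [Real.enorm_eq_ofReal (hg0 ω), ENNReal.ofReal_rpow_of_nonneg (hg0 ω) hp0]
      congr 1
      rw [hg, ← Real.rpow_mul (hmhat0 ω), one_div_mul_cancel hpne, Real.rpow_one]
    have e4 : eLpNorm g (ENNReal.ofReal p) P = ENNReal.ofReal m ^ (1 / p) := by
      rw [eLpNorm_eq_lintegral_rpow_enorm_toReal
        (by simp [ENNReal.ofReal_eq_zero, not_le, hppos])
        ENNReal.ofReal_ne_top, ENNReal.toReal_ofReal hp0]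
      congr 1
      rw [lintegral_congr e5, ← ofReal_integral_eq_lintegral_ofReal hmhatint
        (Filter.Eventually.of_forall hmhat0), hintmhat]
    have e3 : eLpNorm g 1 P ≤ eLpNorm g (ENNReal.ofReal p) P :=
      eLpNorm_le_eLpNorm_of_exponent_le (ENNReal.one_le_ofReal.mpr hp)
        hgmeas.aestronglyMeasurable
    rw [e1, e2]
    have e6 : eLpNorm g (ENNReal.ofReal p) P ≠ ⊤ := by
      rw [e4, ENNReal.ofReal_rpow_of_nonneg hm0 hinv0]
      exact ENNReal.ofReal_ne_top
    calc (eLpNorm g 1 P).toReal ≤ (eLpNorm g (ENNReal.ofReal p) P).toReal :=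
          ENNReal.toReal_mono e6 e3
      _ = m ^ (1 / p) := by
          rw [e4, ENNReal.ofReal_rpow_of_nonneg hm0 hinv0, ENNReal.toReal_ofReal hm'0]
  -- the W functional and its real version
  set a : Matrix (Fin d) (Fin k) ℝ → Ω → ℝ := fun E ω =>
    (Wp p ((empMeasure fun i => X i ω).map (proj E)) (μ.map (proj E))).toReal with ha
  have hWfin : ∀ (E : Matrix (Fin d) (Fin k) ℝ) (ω : Ω),
      Wp p ((empMeasure fun i => X i ω).map (proj E)) (μ.map (proj E)) ≠ ⊤ :=
    fun E ω => W_ne_top hn hp μ hmom E _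
  have hameas : ∀ E : Matrix (Fin d) (Fin k) ℝ, Measurable (a E) := fun E =>
    (continuous_W hn hp μ hmom E).measurable.comp (measurable_pi_lambda _ fun i => hmeas i)
  have hMemp : ∀ ω, Mom p (empMeasure fun i => X i ω) = ENNReal.ofReal (g ω) := fun ω =>
    Mom_emp hn hp _
  have hMmu : Mom p μ = ENNReal.ofReal (m ^ (1 / p)) := Mom_eq_ofReal hp μ hmom
  -- key ENNReal Lipschitz bound
  have hWk : ∀ (U V : Matrix (Fin d) (Fin k) ℝ) (ω : Ω),
      Wp p ((empMeasure fun i => X i ω).map (proj U)) (μ.map (proj U))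
        ≤ Wp p ((empMeasure fun i => X i ω).map (proj V)) (μ.map (proj V))
          + ENNReal.ofReal ((g ω + m ^ (1 / p)) * ‖projL (U - V)‖) := by
    intro U V ω
    haveI := isProbability_empMeasure hn (fun i => X i ω)
    have h := key_le hp (empMeasure fun i => X i ω) μ U V
    rw [hMemp ω, hMmu, ← ENNReal.ofReal_add (hg0 ω) hm'0,
      ← ENNReal.ofReal_mul (norm_nonneg _), mul_comm ‖projL (U - V)‖] at h
    exact h
  have habs : ∀ (U V : Matrix (Fin d) (Fin k) ℝ) (ω : Ω),
      |a U ω - a V ω| ≤ (g ω + m ^ (1 / p)) * ‖projL (U - V)‖ := by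
    intro U V ω
    refine abs_toReal_sub_le (hWfin U ω) (hWfin V ω)
      (mul_nonneg (add_nonneg (hg0 ω) hm'0) (norm_nonneg _)) (hWk U V ω) ?_
    have h := hWk V U ω
    rwa [norm_projL_sub_symm U V] at h
  have haint : ∀ E : Matrix (Fin d) (Fin k) ℝ, Integrable (a E) P := by
    intro E
    refine Integrable.mono' ((hgint.add (integrable_const (m ^ (1 / p)))).mul_const ‖projL E‖)
      (hameas E).aestronglyMeasurable (Filter.Eventually.of_forall fun ω => ?_)
    rw [Real.norm_eq_abs, abs_of_nonneg ENNReal.toReal_nonneg]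
    haveI := isProbability_empMeasure hn (fun i => X i ω)
    have h := W_bound hp (empMeasure fun i => X i ω) μ E
    rw [hMemp ω, hMmu, ← ENNReal.ofReal_add (hg0 ω) hm'0,
      ← ENNReal.ofReal_mul (norm_nonneg _), mul_comm ‖projL E‖] at h
    have h2 := ENNReal.toReal_mono ENNReal.ofReal_ne_top h
    rwa [ENNReal.toReal_ofReal (mul_nonneg (add_nonneg (hg0 ω) hm'0) (norm_nonneg _))] at h2
  have hbint : Integrable (fun ω => (g ω + m ^ (1 / p)) * ‖projL (0 - 0 : Matrix (Fin d) (Fin k) ℝ)‖) P := by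
    exact (hgint.add (integrable_const _)).mul_const _
  constructor
  · intro U V _ _
    refine Filter.Eventually.of_forall fun ω => ?_
    have hIdiff : |(∫ ω', a U ω' ∂P) - ∫ ω', a V ω' ∂P|
        ≤ ((∫ ω', g ω' ∂P) + m ^ (1 / p)) * ‖projL (U - V)‖ := by
      rw [← integral_sub (haint U) (haint V)]
      have h1 : |∫ ω', (a U ω' - a V ω') ∂P| ≤ ∫ ω', |a U ω' - a V ω'| ∂P := by
        have h := norm_integral_le_integral_norm (μ := P) (fun ω' => a U ω' - a V ω')
        simpa [Real.norm_eq_abs] using h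
      refine h1.trans ?_
      have h2 : ∫ ω', |a U ω' - a V ω'| ∂P
          ≤ ∫ ω', (g ω' + m ^ (1 / p)) * ‖projL (U - V)‖ ∂P :=
        integral_mono ((haint U).sub (haint V)).abs
          ((hgint.add (integrable_const _)).mul_const _) (fun ω' => habs U V ω')
      refine h2.trans (le_of_eq ?_)
      rw [MeasureTheory.integral_mul_const, integral_add hgint (integrable_const _),
        integral_const, probReal_univ, one_smul]
    show |(a U ω - ∫ ω', a U ω' ∂P) - (a V ω - ∫ ω', a V ω' ∂P)|
        ≤ (2 * m ^ (1 / p) + g ω + ∫ ω', g ω' ∂P) * ‖projL (U - V)‖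
    have h3 : (a U ω - ∫ ω', a U ω' ∂P) - (a V ω - ∫ ω', a V ω' ∂P)
        = (a U ω - a V ω) - ((∫ ω', a U ω' ∂P) - ∫ ω', a V ω' ∂P) := by ring
    rw [h3]
    calc |(a U ω - a V ω) - ((∫ ω', a U ω' ∂P) - ∫ ω', a V ω' ∂P)|
        ≤ |a U ω - a V ω| + |(∫ ω', a U ω' ∂P) - ∫ ω', a V ω' ∂P| := abs_sub _ _
      _ ≤ (g ω + m ^ (1 / p)) * ‖projL (U - V)‖
          + ((∫ ω', g ω' ∂P) + m ^ (1 / p)) * ‖projL (U - V)‖ :=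
          add_le_add (habs U V ω) hIdiff
      _ = (2 * m ^ (1 / p) + g ω + ∫ ω', g ω' ∂P) * ‖projL (U - V)‖ := by ring
  · show ∫ ω, (2 * m ^ (1 / p) + g ω + ∫ ω', g ω' ∂P) ∂P ≤ 4 * m ^ (1 / p)
    have h1 : ∫ ω, (2 * m ^ (1 / p) + g ω + ∫ ω', g ω' ∂P) ∂P
        = 2 * m ^ (1 / p) + (∫ ω, g ω ∂P) + ∫ ω', g ω' ∂P := by
      have i1 : Integrable (fun ω : Ω => 2 * m ^ (1 / p) + g ω) P :=
        (integrable_const _).add hgint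
      have i2 : Integrable (fun _ : Ω => ∫ ω', g ω' ∂P) P := integrable_const _
      rw [integral_add i1 i2, integral_add (integrable_const (2 * m ^ (1 / p))) hgint,
        integral_const, integral_const, probReal_univ, one_smul, one_smul]
    rw [h1]
    linarith [hgle]
end
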